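/- arXiv:2311.04140 — 3 statements merged into one kernel-verified Lean document; each statement's English description precedes it below -/
import Mathlib

section
/- In an alternating base tree, for any vertex t with E*(T_t) ≠ ∅ and out(t) = {y_t, z_t} with z_t ∈ V(T_t), if dist^{ρ(t)}(y_t) ≤ dist^{ρ(t)}(z_t), then dist^{ρ̄(t)}(z_t) ≤ dist^{ρ(t)}(y_t) + 1, where ρ(t) = ρ(out(t)) and ρ̄(t) its opposite parity. -/
open Classical

namespace AltMatch

variable {V : Type*}

/-- `M` is a matching of `G`: a set of edges of `G` that pairwise share no vertex. -/
def IsMatching (G : SimpleGraph V) (M : Set (Sym2 V)) : Prop :=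
  M ⊆ G.edgeSet ∧ ∀ e₁ ∈ M, ∀ e₂ ∈ M, e₁ ≠ e₂ → ∀ v : V, v ∈ e₁ → v ∉ e₂

/-- `v` is unmatched by `M`. -/
def Unmatched (M : Set (Sym2 V)) (v : V) : Prop := ∀ e ∈ M, v ∉ e

/-- A walk is alternating (starting with a non-matching edge):
its `i`-th edge is in `M` iff `i` is odd. -/
def Alt {G : SimpleGraph V} {u v : V} (M : Set (Sym2 V)) (w : G.Walk u v) : Prop :=
  ∀ (i : ℕ) (h : i < w.edges.length), (w.edges.get ⟨i, h⟩ ∈ M ↔ i % 2 = 1)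

/-- An alternating path (w.r.t. `M`) from `u` to `v`. -/
def IsAltPath (G : SimpleGraph V) (M : Set (Sym2 V)) {u v : V} (w : G.Walk u v) : Prop :=
  w.IsPath ∧ Alt M w

/-- Parity of a natural number as a `Bool` (`true` = odd). -/
def parityOf (n : ℕ) : Bool := decide (n % 2 = 1)

/-- `altDist G M θ f v` : minimum length of an alternating path from `f` to `v`
of parity `θ` (`true` = odd), or `⊤` if none exists. -/
noncomputable def altDist (G : SimpleGraph V) (M : Set (Sym2 V)) (θ : Bool) (f v : V) : ℕ∞ :=
  sInf {n : ℕ∞ | ∃ w : G.Walk f v, IsAltPath G M w ∧ parityOf w.length = θ ∧ (w.length : ℕ∞) = n}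

/-- `gam G M f v` : the parity of the shortest alternating path from `f` to `v`
(`true` = odd). -/
noncomputable def gam (G : SimpleGraph V) (M : Set (Sym2 V)) (f v : V) : Bool :=
  if altDist G M true f v < altDist G M false f v then true else false

/-- `w` is a shortest `θ`-alternating path from `f` to `v`. -/
def IsShortestAlt (G : SimpleGraph V) (M : Set (Sym2 V)) (θ : Bool) (f v : V)
    (w : G.Walk f v) : Prop :=
  IsAltPath G M w ∧ parityOf w.length = θ ∧ (w.length : ℕ∞) = altDist G M θ f v

/-- An `M`-augmenting path: an alternating path of odd length between two distinct
unmatched vertices. -/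
def IsAugPath (G : SimpleGraph V) (M : Set (Sym2 V)) {a b : V} (w : G.Walk a b) : Prop :=
  a ≠ b ∧ Unmatched M a ∧ Unmatched M b ∧ IsAltPath G M w ∧ w.length % 2 = 1

/-- `μ(G)` : the maximum size of a matching of `G`. -/
noncomputable def matchingNumber (G : SimpleGraph V) : ℕ :=
  sSup {n : ℕ | ∃ M : Set (Sym2 V), IsMatching G M ∧ M.Finite ∧ M.ncard = n}

/-- An alternating base tree for `G`, `M`, `f`: a spanning tree of `G` rooted at `f`
(encoded by its parent function) such that for every `v ≠ f` with parent `u`,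
`dist^{γ(v)}(v) = dist^{γ̄(v)}(u) + 1`. -/
structure AltBaseTree (G : SimpleGraph V) (M : Set (Sym2 V)) (f : V) where
  parent : V → V
  parent_root : parent f = f
  parent_adj : ∀ v, v ≠ f → G.Adj (parent v) v
  parent_reaches : ∀ v, ∃ n : ℕ, parent^[n] v = f
  dist_eq : ∀ v, v ≠ f →
    altDist G M (gam G M f v) f v = altDist G M (!gam G M f v) f (parent v) + 1

namespace AltBaseTree

variable {G : SimpleGraph V} {M : Set (Sym2 V)} {f : V}

/-- `v` belongs to the subtree `T_t` of `T` rooted at `t` (`t` is an ancestor-or-self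
of `v`). -/
def InSubtree (T : AltBaseTree G M f) (t v : V) : Prop := ∃ n : ℕ, T.parent^[n] v = t

/-- `e` is an edge of the tree `T`. -/
def IsTreeEdge (T : AltBaseTree G M f) (e : Sym2 V) : Prop :=
  ∃ v, v ≠ f ∧ e = s(T.parent v, v)

/-- `e` is an outgoing edge of the subtree `T_t`: a non-tree edge of `G` with exactly
one endpoint inside `T_t`. -/
def IsOutgoing (T : AltBaseTree G M f) (t : V) (e : Sym2 V) : Prop :=
  e ∈ G.edgeSet ∧ ¬ T.IsTreeEdge e ∧
    ∃ x y : V, e = s(x, y) ∧ ¬ T.InSubtree t x ∧ T.InSubtree t y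

end AltBaseTree

/-- Matching-parity of an edge: `true` (odd) iff `e ∈ M`. -/
noncomputable def rho (M : Set (Sym2 V)) (e : Sym2 V) : Bool :=
  if e ∈ M then true else false

/-- Sum-level of an edge `e = {x,y}` : `dist^{ρ(e)}(x) + dist^{ρ(e)}(y)`. -/
noncomputable def levelSum (G : SimpleGraph V) (M : Set (Sym2 V)) (f : V) (e : Sym2 V) : ℕ∞ :=
  Sym2.lift ⟨fun x y => altDist G M (rho M e) f x + altDist G M (rho M e) f y,
    fun x y => add_comm _ _⟩ e

/-- Max-level of an edge `e = {x,y}` : `max (dist^{ρ(e)}(x)) (dist^{ρ(e)}(y))`. -/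
noncomputable def levelMax (G : SimpleGraph V) (M : Set (Sym2 V)) (f : V) (e : Sym2 V) : ℕ∞ :=
  Sym2.lift ⟨fun x y => max (altDist G M (rho M e) f x) (altDist G M (rho M e) f y),
    fun x y => max_comm _ _⟩ e

/-- The level of an edge: `(0,0)` for tree edges, and the lexicographic pair
`(sum-level, max-level)` otherwise. -/
noncomputable def level {G : SimpleGraph V} {M : Set (Sym2 V)} {f : V}
    (T : AltBaseTree G M f) (e : Sym2 V) : Lex (ℕ∞ × ℕ∞) :=
  if T.IsTreeEdge e then toLex ((0 : ℕ∞), (0 : ℕ∞))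
  else toLex (levelSum G M f e, levelMax G M f e)

/-- The level of a walk: the maximum level of its edges. -/
noncomputable def walkLevel {G : SimpleGraph V} {M : Set (Sym2 V)} {f : V}
    (T : AltBaseTree G M f) {a b : V} (w : G.Walk a b) : Lex (ℕ∞ × ℕ∞) :=
  (w.edges.map (level T)).foldr max (toLex ((0 : ℕ∞), (0 : ℕ∞)))

/-- `out` assigns to each vertex `v` (whose subtree has an outgoing edge) a
minimum-level outgoing edge of `T_v`. -/
def IsMOE {G : SimpleGraph V} {M : Set (Sym2 V)} {f : V}
    (T : AltBaseTree G M f) (out : V → Sym2 V) : Prop :=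
  ∀ v, (∃ e, T.IsOutgoing v e) →
    T.IsOutgoing v (out v) ∧ ∀ e, T.IsOutgoing v e → level T (out v) ≤ level T e

/-- Canonical tie-breaking rule for MOEs: if a minimum-level outgoing edge of `T_v`
incident to `v` exists, then `out v` is incident to `v`. -/
def CanonicalTie {G : SimpleGraph V} {M : Set (Sym2 V)} {f : V}
    (T : AltBaseTree G M f) (out : V → Sym2 V) : Prop :=
  ∀ v e, T.IsOutgoing v e → (∀ e', T.IsOutgoing v e' → level T e ≤ level T e') →
    v ∈ e → v ∈ out v

/-- Level of `out v`, with the virtual value `(∞,∞)` when `T_v` has no outgoing edge. -/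
noncomputable def outLevel {G : SimpleGraph V} {M : Set (Sym2 V)} {f : V}
    (T : AltBaseTree G M f) (out : V → Sym2 V) (v : V) : Lex (ℕ∞ × ℕ∞) :=
  if ∃ e, T.IsOutgoing v e then level T (out v) else toLex ((⊤ : ℕ∞), (⊤ : ℕ∞))

/-- `P` is a `θ`-extension of the pair `(s,t)`: a shortest `θ`-alternating path from
`f` to `t` passing through `s` with `level(P) < level(out(s))`. -/
def IsExtension {G : SimpleGraph V} {M : Set (Sym2 V)} {f : V}
    (T : AltBaseTree G M f) (out : V → Sym2 V) (θ : Bool) (s : V) {t : V}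
    (P : G.Walk f t) : Prop :=
  IsShortestAlt G M θ f t P ∧ s ∈ P.support ∧ walkLevel T P < outLevel T out s

/-- `Q` is a `θ`-extendable path from `s` to `t`: the suffix `P[s,t]` of some
`θ`-extension `P` of `(s,t)`. -/
def IsExtendablePath [DecidableEq V] {G : SimpleGraph V} {M : Set (Sym2 V)} {f : V}
    (T : AltBaseTree G M f) (out : V → Sym2 V) (θ : Bool) {s t : V}
    (Q : G.Walk s t) : Prop :=
  ∃ (P : G.Walk f t) (hs : s ∈ P.support), IsExtension T out θ s P ∧ P.dropUntil s hs = Q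

end AltMatch

open AltMatch

private lemma altDist_apply_def {V : Type*} (G : SimpleGraph V) (M : Set (Sym2 V))
    (θ : Bool) (f v : V) :
    altDist G M θ f v = sInf {n : ℕ∞ | ∃ w : G.Walk f v,
      IsAltPath G M w ∧ parityOf w.length = θ ∧ (w.length : ℕ∞) = n} := rfl

/-- For `out(t) = {y_t, z_t}`, `z_t ∈ T_t`: if `dist^{ρ(t)}(y_t) ≤ dist^{ρ(t)}(z_t)`
then `dist^{ρ̄(t)}(z_t) ≤ dist^{ρ(t)}(y_t) + 1`. -/
theorem opp_parity_dist_of_zt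
    {V : Type*} [Fintype V] [DecidableEq V] (G : SimpleGraph V) (M : Set (Sym2 V))
    (f : V) (hM : IsMatching G M) (hf : Unmatched M f)
    (hreach : ∀ v : V, altDist G M true f v ≠ ⊤ ∨ altDist G M false f v ≠ ⊤)
    (T : AltBaseTree G M f) (out : V → Sym2 V) (hmoe : IsMOE T out)
    (t yt zt : V)
    (hstar : ∃ e, T.IsOutgoing t e ∧ levelSum G M f e ≠ ⊤)
    (hout : out t = s(yt, zt)) (hzt : T.InSubtree t zt) (hyt : ¬ T.InSubtree t yt)
    (hle : altDist G M (rho M (out t)) f yt ≤ altDist G M (rho M (out t)) f zt) :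
    altDist G M (!rho M (out t)) f zt ≤ altDist G M (rho M (out t)) f yt + 1 := by
  classical
  set ρ := rho M (out t) with hρ
  -- `out t` is an outgoing edge, hence an edge of `G`
  obtain ⟨e, he, -⟩ := hstar
  have hog : T.IsOutgoing t (out t) := (hmoe t ⟨e, he⟩).1
  have hadj : G.Adj yt zt := by
    have := hog.1
    rw [hout] at this
    exact this
  have hne : yt ≠ zt := hadj.ne
  by_cases htop : altDist G M ρ f yt = ⊤
  · rw [htop]
    simp
  -- extract a shortest ρ-alternating path to yt
  have hSne : {n : ℕ∞ | ∃ w : G.Walk f yt,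
      IsAltPath G M w ∧ parityOf w.length = ρ ∧ (w.length : ℕ∞) = n}.Nonempty := by
    by_contra hcon
    rw [Set.not_nonempty_iff_eq_empty] at hcon
    apply htop
    rw [altDist_apply_def G M ρ f yt, hcon, sInf_empty]
  have hmem := csInf_mem hSne
  obtain ⟨P, hPalt, hPpar, hPlen⟩ := hmem
  rw [← altDist_apply_def G M ρ f yt] at hPlen
  by_cases hzt : zt ∈ P.support
  · -- zt on P : look at the prefix
    set Q := P.takeUntil zt hzt with hQ
    have hQpath : Q.IsPath := hPalt.1.takeUntil hzt
    have hspec := P.take_spec hzt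
    have hQalt : Alt M Q := by
      intro i hi
      have hi' : i < P.edges.length := by
        have : P.edges = Q.edges ++ (P.dropUntil zt hzt).edges := by
          rw [← SimpleGraph.Walk.edges_append, hspec]
        rw [this, List.length_append]
        omega
      have hget : P.edges.get ⟨i, hi'⟩ = Q.edges.get ⟨i, hi⟩ := by
        have : P.edges = Q.edges ++ (P.dropUntil zt hzt).edges := by
          rw [← SimpleGraph.Walk.edges_append, hspec]
        simp only [List.get_eq_getElem]
        rw [List.getElem_of_eq this hi']
        exact List.getElem_append_left hi
      rw [← hget]
      exact hPalt.2 i hi'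
    have hQd : altDist G M (parityOf Q.length) f zt ≤ (Q.length : ℕ∞) := by
      rw [altDist_apply_def]
      exact sInf_le ⟨Q, ⟨hQpath, hQalt⟩, rfl, rfl⟩
    have hQlt : Q.length < P.length := by
      have hlen : Q.length + (P.dropUntil zt hzt).length = P.length := by
        have := congrArg SimpleGraph.Walk.length hspec
        rwa [SimpleGraph.Walk.length_append] at this
      have hdpos : (P.dropUntil zt hzt).length ≠ 0 := fun h0 =>
        hne.symm (SimpleGraph.Walk.eq_of_length_eq_zero h0)
      omega
    by_cases hpk : parityOf Q.length = ρ
    · -- contradiction with minimality and hle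
      exfalso
      have h1 : altDist G M ρ f zt ≤ (Q.length : ℕ∞) := hpk ▸ hQd
      have h2 : altDist G M ρ f yt ≤ altDist G M ρ f zt := hle
      have h3 : (Q.length : ℕ∞) < (P.length : ℕ∞) := by exact_mod_cast hQlt
      rw [hPlen] at h3
      exact absurd (lt_of_le_of_lt (h2.trans h1) h3) (lt_irrefl _)
    · have hpk' : parityOf Q.length = !ρ := by
        cases hb : parityOf Q.length <;> cases hc : ρ <;> simp_all
      rw [hpk'] at hQd
      calc altDist G M (!ρ) f zt ≤ (Q.length : ℕ∞) := hQd
        _ ≤ (P.length : ℕ∞) := by exact_mod_cast hQlt.le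
        _ = altDist G M ρ f yt := hPlen
        _ ≤ altDist G M ρ f yt + 1 := le_self_add
  · -- zt not on P : extend P by the edge {yt, zt}
    set W := P.concat hadj with hW
    have hWpath : W.IsPath := by
      rw [SimpleGraph.Walk.isPath_def, SimpleGraph.Walk.support_concat,
        List.nodup_append']
      refine ⟨hPalt.1.support_nodup, List.nodup_singleton _, ?_⟩
      intro a ha hb
      simp only [List.mem_singleton] at hb
      subst hb
      exact hzt ha
    have hWedges : W.edges = P.edges ++ [s(yt, zt)] := by
      rw [hW, SimpleGraph.Walk.edges_concat, List.concat_eq_append]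
    have hmemM : s(yt, zt) ∈ M ↔ ρ = true := by
      rw [hρ, hout, rho]
      split <;> simp_all
    have hWalt : Alt M W := by
      intro i hi
      have hlenW : W.edges.length = P.edges.length + 1 := by
        rw [hWedges, List.length_append, List.length_singleton]
      rcases lt_or_ge i P.edges.length with hlt | hge
      · have hget : W.edges.get ⟨i, hi⟩ = P.edges.get ⟨i, hlt⟩ := by
          simp only [List.get_eq_getElem]
          rw [List.getElem_of_eq hWedges hi]
          exact List.getElem_append_left hlt
        rw [hget]
        exact hPalt.2 i hlt
      · have hieq : i = P.edges.length := by omega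
        have hget : W.edges.get ⟨i, hi⟩ = s(yt, zt) := by
          simp only [List.get_eq_getElem]
          rw [List.getElem_of_eq hWedges hi]
          subst hieq
          simp
        rw [hget, hmemM]
        have : decide (P.length % 2 = 1) = ρ := hPpar
        rw [hieq, SimpleGraph.Walk.length_edges]
        rw [← this]
        simp
    have hWpar : parityOf W.length = !ρ := by
      have hWl : W.length = P.length + 1 := SimpleGraph.Walk.length_concat _ _
      rw [hWl, ← hPpar]
      rcases Nat.mod_two_eq_zero_or_one P.length with h | h <;>
        simp [parityOf, Nat.add_mod, h]
    have : altDist G M (!ρ) f zt ≤ (W.length : ℕ∞) := by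
      rw [altDist_apply_def]
      exact sInf_le ⟨W, ⟨hWpath, hWalt⟩, hWpar, rfl⟩
    calc altDist G M (!ρ) f zt ≤ (W.length : ℕ∞) := this
      _ = (P.length : ℕ∞) + 1 := by
          rw [hW, SimpleGraph.Walk.length_concat]; push_cast; ring
      _ = altDist G M ρ f yt + 1 := by rw [hPlen]
end

section
/- Uniqueness of extendable path lengths: fix an alternating base tree T with canonical minimum outgoing edges out(·). For vertices s, t with s an ancestor of t in T and parity θ, call a pair (s,t) θ-extendable if there is a shortest θ-alternating path P from f to t with s ∈ V(P) and level(P) < level(out(s)); P[s,t] is then a θ-extendable path. Then for any θ-extendable pair (s,t), all θ-extendable paths from s to t have the same length. -/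
open Classical

namespace ExtUnique

open AltMatch SimpleGraph

variable {V : Type*} [DecidableEq V] {G : SimpleGraph V} {M : Set (Sym2 V)} {f : V}

lemma iterate_parent_fixed (T : AltBaseTree G M f) (n : ℕ) : T.parent^[n] f = f :=
  Function.iterate_fixed T.parent_root n

lemma not_inSubtree_f (T : AltBaseTree G M f) {s : V} (hs : s ≠ f) : ¬ T.InSubtree s f := by
  rintro ⟨n, hn⟩
  rw [iterate_parent_fixed] at hn
  exact hs hn.symm

lemma inSubtree_self (T : AltBaseTree G M f) (s : V) : T.InSubtree s s := ⟨0, rfl⟩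

lemma inSubtree_of_parent (T : AltBaseTree G M f) {s v : V} (h : T.InSubtree s (T.parent v)) :
    T.InSubtree s v := by
  obtain ⟨n, hn⟩ := h
  exact ⟨n + 1, by rw [Function.iterate_succ_apply]; exact hn⟩

lemma parent_inSubtree (T : AltBaseTree G M f) {s v : V} (h : T.InSubtree s v) (hvs : v ≠ s) :
    T.InSubtree s (T.parent v) := by
  obtain ⟨n, hn⟩ := h
  cases n with
  | zero => exact absurd hn hvs
  | succ n => exact ⟨n, by rw [← Function.iterate_succ_apply]; exact hn⟩

lemma le_foldr_max {α : Type*} [LinearOrder α] {x : α} :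
    ∀ {l : List α}, x ∈ l → ∀ (init : α), x ≤ l.foldr max init := by
  intro l
  induction l with
  | nil => intro h; simp at h
  | cons a l ih =>
    intro hx init
    rcases List.mem_cons.mp hx with rfl | hx
    · exact le_max_left _ _
    · exact (ih hx init).trans (le_max_right _ _)

lemma level_le_walkLevel (T : AltBaseTree G M f) {a b : V} (w : G.Walk a b) {e : Sym2 V}
    (he : e ∈ w.edges) : level T e ≤ walkLevel T w :=
  le_foldr_max (List.mem_map_of_mem (f := level T) he) _

lemma crossing (T : AltBaseTree G M f) {out : V → Sym2 V} (hmoe : IsMOE T out)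
    {s t : V} {P : G.Walk f t} (hlev : walkLevel T P < outLevel T out s)
    {x y : V} (he : s(x, y) ∈ P.edges) (hx : ¬ T.InSubtree s x) (hy : T.InSubtree s y) :
    x = T.parent s ∧ y = s := by
  by_cases htree : T.IsTreeEdge s(x, y)
  · obtain ⟨v, hvf, hv⟩ := htree
    rw [Sym2.eq_iff] at hv
    rcases hv with ⟨rfl, rfl⟩ | ⟨rfl, rfl⟩
    · have hvs : y = s := by
        by_contra h
        exact hx (parent_inSubtree T hy h)
      exact ⟨by rw [hvs], hvs⟩
    · exact absurd (inSubtree_of_parent T hy) hx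
  · have hout : T.IsOutgoing s s(x, y) :=
      ⟨P.edges_subset_edgeSet he, htree, x, y, rfl, hx, hy⟩
    have h1 := (hmoe s ⟨_, hout⟩).2 _ hout
    have h2 : outLevel T out s = level T (out s) := by
      rw [outLevel, if_pos (⟨_, hout⟩ : ∃ e, T.IsOutgoing s e)]
    have h3 := level_le_walkLevel T P he
    have : outLevel T out s ≤ walkLevel T P := by rw [h2]; exact h1.trans h3
    exact absurd hlev (not_lt_of_ge this)

lemma cross_reach (T : AltBaseTree G M f) {out : V → Sym2 V} (hmoe : IsMOE T out)
    {s t : V} {P : G.Walk f t} (hlev : walkLevel T P < outLevel T out s) :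
    ∀ {a b : V} (w : G.Walk a b), (∀ e ∈ w.edges, e ∈ P.edges) →
      ¬ T.InSubtree s a → T.InSubtree s b → s ∈ w.support.tail := by
  intro a b w
  induction w with
  | nil => intro _ ha hb; exact absurd hb ha
  | @cons a c b hadj w ih =>
    intro hsub ha hb
    by_cases hc : T.InSubtree s c
    · have hcs := (crossing T hmoe hlev (hsub _ (by simp)) ha hc).2
      rw [Walk.support_cons, List.tail_cons, ← hcs]
      exact w.start_mem_support
    · have h := ih (fun e he => hsub e (by simp [he])) hc hb
      rw [Walk.support_cons, List.tail_cons]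
      exact List.mem_of_mem_tail h

lemma dropUntil_inside (T : AltBaseTree G M f) {out : V → Sym2 V} (hmoe : IsMOE T out)
    {s t : V} {P : G.Walk f t} (hP : P.IsPath) (hlev : walkLevel T P < outLevel T out s)
    (hs : s ∈ P.support) (hst : T.InSubtree s t) :
    ∀ v ∈ (P.dropUntil s hs).support, T.InSubtree s v := by
  intro v hv
  by_contra hvout
  have hQpath : (P.dropUntil s hs).IsPath := hP.dropUntil hs
  set Q := P.dropUntil s hs with hQ
  have hs' : s ∈ (Q.takeUntil v hv).support := (Q.takeUntil v hv).start_mem_support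
  have hcr := cross_reach T hmoe hlev (Q.dropUntil v hv)
      (fun e he => P.edges_dropUntil_subset hs (Q.edges_dropUntil_subset hv he)) hvout hst
  have hsupp := congrArg Walk.support (Q.take_spec hv)
  rw [Walk.support_append] at hsupp
  have hnodup := hQpath.support_nodup
  rw [← hsupp] at hnodup
  exact (List.nodup_append'.mp hnodup).2.2 hs' hcr

lemma walk_loop_eq_nil {v : V} {p : G.Walk v v} (hp : p.IsPath) : p = Walk.nil := by
  cases p with
  | nil => rfl
  | cons h q =>
    exfalso
    have hn := hp.support_nodup
    rw [Walk.support_cons] at hn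
    exact (List.nodup_cons.mp hn).1 q.end_mem_support

lemma takeUntil_outside (T : AltBaseTree G M f) {out : V → Sym2 V} (hmoe : IsMOE T out)
    {s t : V} {P : G.Walk f t} (hP : P.IsPath) (hlev : walkLevel T P < outLevel T out s)
    (hs : s ∈ P.support) :
    ∀ v ∈ (P.takeUntil s hs).support, v ≠ s → ¬ T.InSubtree s v := by
  intro v hv hvs hvin
  by_cases hsf : s = f
  · subst hsf
    have hnil : P.takeUntil s hs = Walk.nil := walk_loop_eq_nil (hP.takeUntil hs)
    rw [hnil] at hv
    simp only [Walk.support_nil, List.mem_singleton] at hv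
    exact hvs hv
  · have hApath : (P.takeUntil s hs).IsPath := hP.takeUntil hs
    set A := P.takeUntil s hs with hA
    have hcr := cross_reach T hmoe hlev (A.takeUntil v hv)
        (fun e he => P.edges_takeUntil_subset hs (A.edges_takeUntil_subset hv he))
        (not_inSubtree_f T hsf) hvin
    have hs1 : s ∈ (A.takeUntil v hv).support := List.mem_of_mem_tail hcr
    have hs2 : s ∈ (A.dropUntil v hv).support.tail := by
      have h3 : s ∈ (A.dropUntil v hv).support := (A.dropUntil v hv).end_mem_support
      rw [Walk.support_eq_cons (A.dropUntil v hv)] at h3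
      rcases List.mem_cons.mp h3 with h | h
      · exact absurd h.symm hvs
      · exact h
    have hspec := congrArg Walk.support (A.take_spec hv)
    rw [Walk.support_append] at hspec
    have hnodup := hApath.support_nodup
    rw [← hspec] at hnodup
    exact (List.nodup_append'.mp hnodup).2.2 hs1 hs2

lemma one_le_takeUntil_length {s t : V} {P : G.Walk f t} (hs : s ∈ P.support) (hsf : s ≠ f) :
    1 ≤ (P.takeUntil s hs).length := by
  rcases Nat.eq_zero_or_pos (P.takeUntil s hs).length with h | h
  · exact absurd (Walk.eq_of_length_eq_zero h) (Ne.symm hsf)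
  · exact h

lemma takeUntil_edges_ne_nil {s t : V} {P : G.Walk f t} (hs : s ∈ P.support) (hsf : s ≠ f) :
    (P.takeUntil s hs).edges ≠ [] := by
  intro h
  have h1 := one_le_takeUntil_length hs hsf
  have h2 := (P.takeUntil s hs).length_edges
  rw [h] at h2
  simp at h2
  omega

lemma takeUntil_last_edge (T : AltBaseTree G M f) {out : V → Sym2 V} (hmoe : IsMOE T out)
    {s t : V} {P : G.Walk f t} (hP : P.IsPath) (hlev : walkLevel T P < outLevel T out s)
    (hs : s ∈ P.support) (hsf : s ≠ f) (h : (P.takeUntil s hs).edges ≠ []) :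
    (P.takeUntil s hs).edges.getLast h = s(T.parent s, s) := by
  set A := P.takeUntil s hs with hA
  have hd : A.darts ≠ [] := by
    intro hdn
    apply h
    show A.darts.map SimpleGraph.Dart.edge = []
    rw [hdn]; rfl
  have hsnd : (A.darts.getLast hd).snd = s := by rw [A.getLast_darts_eq_lastDart hd]; rfl
  set d := A.darts.getLast hd with hdd
  have hmem : d ∈ A.darts := List.getLast_mem hd
  have hfst_mem : d.fst ∈ A.support := A.dart_fst_mem_support_of_mem_darts hmem
  have hfst_ne : d.fst ≠ s := by
    rw [← hsnd]; exact d.fst_ne_snd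
  have hfst_out : ¬ T.InSubtree s d.fst :=
    takeUntil_outside T hmoe hP hlev hs d.fst hfst_mem hfst_ne
  have hde : d.edge = s(d.fst, d.snd) := rfl
  have hedge : d.edge ∈ P.edges :=
    P.edges_takeUntil_subset hs (List.mem_map_of_mem hmem)
  have he2 : s(d.fst, s) ∈ P.edges := by
    rw [← hsnd, ← hde]; exact hedge
  have hcross := crossing T hmoe hlev he2 hfst_out (inSubtree_self T s)
  have hlast : A.edges.getLast h = d.edge := by
    show (A.darts.map SimpleGraph.Dart.edge).getLast h = d.edge
    exact List.getLast_map (f := SimpleGraph.Dart.edge) h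
  rw [hlast, hde, hcross.1, hsnd]

lemma last_edge_parity (T : AltBaseTree G M f) {out : V → Sym2 V} (hmoe : IsMOE T out)
    {s t : V} {P : G.Walk f t} (hP : P.IsPath) (halt : Alt M P)
    (hlev : walkLevel T P < outLevel T out s) (hs : s ∈ P.support) (hsf : s ≠ f) :
    (s(T.parent s, s) ∈ M ↔ ((P.takeUntil s hs).length - 1) % 2 = 1) := by
  have hne := takeUntil_edges_ne_nil hs hsf
  have hlastA := takeUntil_last_edge T hmoe hP hlev hs hsf hne
  set A := P.takeUntil s hs with hA
  have hAlen : A.edges.length = A.length := A.length_edges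
  have hl1 : 1 ≤ A.length := one_le_takeUntil_length hs hsf
  have hPe : A.edges ++ (P.dropUntil s hs).edges = P.edges := by
    rw [← Walk.edges_append, P.take_spec hs]
  have hlenle : A.length ≤ P.length := P.length_takeUntil_le hs
  have hPle : P.edges.length = P.length := P.length_edges
  have hbound : A.length - 1 < P.edges.length := by omega
  have h1 := halt (A.length - 1) hbound
  simp only [List.get_eq_getElem, Fin.val_mk] at h1
  have hiA : A.length - 1 < A.edges.length := by omega
  have h2 : P.edges[A.length - 1]'hbound = s(T.parent s, s) := by
    rw [List.getElem_of_eq hPe.symm hbound, List.getElem_append_left hiA]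
    have hidx : A.length - 1 = A.edges.length - 1 := by omega
    simp only [hidx]
    rw [← List.getLast_eq_getElem]
    exact hlastA
  rw [h2] at h1
  exact h1

lemma exchange (T : AltBaseTree G M f) {out : V → Sym2 V} (hmoe : IsMOE T out)
    {θ : Bool} {s t : V} {P₁ P₂ : G.Walk f t}
    (h₁ : IsExtension T out θ s P₁) (h₂ : IsExtension T out θ s P₂)
    (hs₁ : s ∈ P₁.support) (hs₂ : s ∈ P₂.support) (hst : T.InSubtree s t)
    (hpar : (P₁.takeUntil s hs₁).length % 2 = (P₂.takeUntil s hs₂).length % 2) :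
    (P₂.takeUntil s hs₂).length ≤ (P₁.takeUntil s hs₁).length := by
  by_contra hlt
  push_neg at hlt
  obtain ⟨⟨⟨hP₁path, hP₁alt⟩, hP₁par, hP₁dist⟩, _, hlev₁⟩ := h₁
  obtain ⟨⟨⟨hP₂path, hP₂alt⟩, hP₂par, hP₂dist⟩, _, hlev₂⟩ := h₂
  have hA₁path : (P₁.takeUntil s hs₁).IsPath := hP₁path.takeUntil hs₁
  have hQ₂path : (P₂.dropUntil s hs₂).IsPath := hP₂path.dropUntil hs₂
  set A₁ := P₁.takeUntil s hs₁ with hA₁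
  set A₂ := P₂.takeUntil s hs₂ with hA₂
  set Q₂ := P₂.dropUntil s hs₂ with hQ₂
  set W := A₁.append Q₂ with hW
  have hsplit₂ : A₂.length + Q₂.length = P₂.length := by
    rw [← Walk.length_append, P₂.take_spec hs₂]
  have hWlen : W.length = A₁.length + Q₂.length := Walk.length_append _ _
  have hWpath : W.IsPath := by
    rw [Walk.isPath_def, Walk.support_append, List.nodup_append']
    refine ⟨hA₁path.support_nodup, hQ₂path.support_nodup.sublist (List.tail_sublist _), ?_⟩
    intro x hx1 hx2
    have hxin : T.InSubtree s x :=
      dropUntil_inside T hmoe hP₂path hlev₂ hs₂ hst x (List.mem_of_mem_tail hx2)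
    by_cases hxs : x = s
    · subst hxs
      have hn := hQ₂path.support_nodup
      rw [Walk.support_eq_cons] at hn
      exact (List.nodup_cons.mp hn).1 hx2
    · exact takeUntil_outside T hmoe hP₁path hlev₁ hs₁ x hx1 hxs hxin
  have hP₁e : A₁.edges ++ (P₁.dropUntil s hs₁).edges = P₁.edges := by
    rw [← Walk.edges_append, P₁.take_spec hs₁]
  have hP₂e : A₂.edges ++ Q₂.edges = P₂.edges := by
    rw [← Walk.edges_append, P₂.take_spec hs₂]
  have hWe : W.edges = A₁.edges ++ Q₂.edges := Walk.edges_append _ _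
  have le1 : A₁.edges.length = A₁.length := A₁.length_edges
  have le2 : A₂.edges.length = A₂.length := A₂.length_edges
  have leq : Q₂.edges.length = Q₂.length := Q₂.length_edges
  have lp1 : P₁.edges.length = P₁.length := P₁.length_edges
  have lp2 : P₂.edges.length = P₂.length := P₂.length_edges
  have hWelen : W.edges.length = A₁.edges.length + Q₂.edges.length := by
    rw [hWe, List.length_append]
  have hAP : A₁.length ≤ P₁.length := P₁.length_takeUntil_le hs₁
  clear_value A₁ A₂ Q₂ W
  have hWalt : Alt M W := by
    intro i hi
    simp only [List.get_eq_getElem, Fin.val_mk]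
    by_cases hcase : i < A₁.edges.length
    · have hiP : i < P₁.edges.length := by
        have := P₁.length_takeUntil_le hs₁
        omega
      have e1 : W.edges[i]'hi = A₁.edges[i]'hcase := by
        rw [List.getElem_of_eq hWe hi, List.getElem_append_left hcase]
      have e2 : P₁.edges[i]'hiP = A₁.edges[i]'hcase := by
        rw [List.getElem_of_eq hP₁e.symm hiP, List.getElem_append_left hcase]
      have halt1 := hP₁alt i hiP
      rw [List.get_eq_getElem, e2] at halt1
      rw [e1]
      exact halt1
    · push_neg at hcase
      have hj : i - A₁.edges.length < Q₂.edges.length := by omega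
      have e1 : W.edges[i]'hi = Q₂.edges[i - A₁.edges.length]'hj := by
        rw [List.getElem_of_eq hWe hi, List.getElem_append_right hcase]
      have hiP₂ : (i - A₁.edges.length) + A₂.edges.length < P₂.edges.length := by omega
      have halt2 := hP₂alt ((i - A₁.edges.length) + A₂.edges.length) hiP₂
      simp only [List.get_eq_getElem, Fin.val_mk] at halt2
      have e2 : Q₂.edges[i - A₁.edges.length]'hj
          = P₂.edges[(i - A₁.edges.length) + A₂.edges.length]'hiP₂ := by
        rw [List.getElem_append_right' A₂.edges hj]
        exact List.getElem_of_eq hP₂e _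
      rw [e1, e2, halt2]
      omega
  have hWpar : parityOf W.length = θ := by
    rw [← hP₂par]
    unfold parityOf
    have hmod : W.length % 2 = P₂.length % 2 := by omega
    rw [hmod]
  have hmem : (W.length : ℕ∞) ∈ {n : ℕ∞ | ∃ w : G.Walk f t,
      IsAltPath G M w ∧ parityOf w.length = θ ∧ (w.length : ℕ∞) = n} :=
    ⟨W, ⟨hWpath, hWalt⟩, hWpar, rfl⟩
  have hle : altDist G M θ f t ≤ (W.length : ℕ∞) := by
    unfold altDist
    exact sInf_le hmem
  rw [← hP₂dist] at hle
  have hfin : P₂.length ≤ W.length := by exact_mod_cast hle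
  omega

end ExtUnique

open ExtUnique

open AltMatch

/-- Uniqueness of extendable path lengths: for a `θ`-extendable pair `(s,t)`, all
`θ`-extendable paths from `s` to `t` have the same length. -/
theorem extendable_paths_same_length
    {V : Type*} [Fintype V] [DecidableEq V] (G : SimpleGraph V) (M : Set (Sym2 V))
    (f : V) (hM : IsMatching G M) (hf : Unmatched M f)
    (hreach : ∀ v : V, altDist G M true f v ≠ ⊤ ∨ altDist G M false f v ≠ ⊤)
    (T : AltBaseTree G M f) (out : V → Sym2 V)
    (hmoe : IsMOE T out) (htie : CanonicalTie T out)
    (θ : Bool) (s t : V) (hanc : T.InSubtree s t)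
    (hext : ∃ P : G.Walk f t, IsExtension T out θ s P) :
    ∀ (Q₁ Q₂ : G.Walk s t), IsExtendablePath T out θ Q₁ →
      IsExtendablePath T out θ Q₂ → Q₁.length = Q₂.length := by
  
  rintro Q₁ Q₂ ⟨P₁, hs₁, hext₁, hQ₁⟩ ⟨P₂, hs₂, hext₂, hQ₂⟩
  subst hQ₁
  subst hQ₂
  have hlen : P₁.length = P₂.length := by
    have h1 := hext₁.1.2.2
    have h2 := hext₂.1.2.2
    rw [← h2] at h1
    exact_mod_cast h1
  have hsplit₁ : (P₁.takeUntil s hs₁).length + (P₁.dropUntil s hs₁).length = P₁.length := by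
    rw [← SimpleGraph.Walk.length_append, P₁.take_spec hs₁]
  have hsplit₂ : (P₂.takeUntil s hs₂).length + (P₂.dropUntil s hs₂).length = P₂.length := by
    rw [← SimpleGraph.Walk.length_append, P₂.take_spec hs₂]
  have hpar : (P₁.takeUntil s hs₁).length % 2 = (P₂.takeUntil s hs₂).length % 2 := by
    by_cases hsf : s = f
    · subst hsf
      have e1 : P₁.takeUntil s hs₁ = SimpleGraph.Walk.nil :=
        walk_loop_eq_nil (hext₁.1.1.1.takeUntil hs₁)
      have e2 : P₂.takeUntil s hs₂ = SimpleGraph.Walk.nil :=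
        walk_loop_eq_nil (hext₂.1.1.1.takeUntil hs₂)
      rw [e1, e2]
    · have h1 := last_edge_parity T hmoe hext₁.1.1.1 hext₁.1.1.2 hext₁.2.2 hs₁ hsf
      have h2 := last_edge_parity T hmoe hext₂.1.1.1 hext₂.1.1.2 hext₂.2.2 hs₂ hsf
      have n1 := one_le_takeUntil_length hs₁ hsf
      have n2 := one_le_takeUntil_length hs₂ hsf
      rw [h1] at h2
      omega
  have hle₁ := exchange T hmoe hext₁ hext₂ hs₁ hs₂ hanc hpar
  have hle₂ := exchange T hmoe hext₂ hext₁ hs₂ hs₁ hanc hpar.symm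
  omega
end

section
/- In an alternating base tree, for any γ̄(t)-extendable pair (s,t) with out(t) = {y_t, z_t}, z_t ∈ V(T_t), and ρ = ρ(out(t)): the length of the tree path R from t to z_t in T satisfies |R| ≤ |Z| for every ρ-extendable path Z from t to z_t, and |R| ≤ |Y| for every ρ-extendable path Y from s to y_t. -/
open Classical

namespace AltMatchAux

open AltMatch SimpleGraph

variable {V : Type*} [DecidableEq V] {G : SimpleGraph V} {M : Set (Sym2 V)} {f : V}

/-! ### parity helpers -/

set_option linter.unusedSectionVars false
set_option linter.unusedVariables false

lemma parityOf_true_iff {n : ℕ} : parityOf n = true ↔ n % 2 = 1 := by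
  rw [parityOf, decide_eq_true_eq]

lemma parityOf_false_iff {n : ℕ} : parityOf n = false ↔ n % 2 = 0 := by
  rw [parityOf, decide_eq_false_iff_not]; omega

lemma mod_eq_of_parityOf_eq {m n : ℕ} (h : parityOf m = parityOf n) : m % 2 = n % 2 := by
  rcases hb : parityOf n with _ | _
  · rw [hb, parityOf_false_iff] at h
    rw [parityOf_false_iff] at hb
    omega
  · rw [hb, parityOf_true_iff] at h
    rw [parityOf_true_iff] at hb
    omega

lemma parityOf_eq_of_mod_eq {m n : ℕ} (h : m % 2 = n % 2) : parityOf m = parityOf n := by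
  simp [parityOf, h]

/-! ### altDist API -/

lemma altDist_le_of_alt {v : V} (w : G.Walk f v) (h : IsAltPath G M w) :
    altDist G M (parityOf w.length) f v ≤ w.length :=
  sInf_le ⟨w, h, rfl, rfl⟩

lemma altDist_le_of_alt' {v : V} {θ : Bool} (w : G.Walk f v) (h : IsAltPath G M w)
    (hθ : parityOf w.length = θ) : altDist G M θ f v ≤ w.length :=
  hθ ▸ altDist_le_of_alt w h

lemma exists_shortest {v : V} {θ : Bool} (h : altDist G M θ f v ≠ ⊤) :
    ∃ w : G.Walk f v, IsShortestAlt G M θ f v w := by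
  classical
  have hne : {n : ℕ∞ | ∃ w : G.Walk f v,
      IsAltPath G M w ∧ parityOf w.length = θ ∧ (w.length : ℕ∞) = n}.Nonempty := by
    by_contra hcon
    rw [Set.not_nonempty_iff_eq_empty] at hcon
    exact h (by rw [altDist, hcon, sInf_empty])
  obtain ⟨n, w, hw, hp, hn⟩ := hne
  have hTne : {L : ℕ | ∃ w : G.Walk f v, IsAltPath G M w ∧ parityOf w.length = θ ∧
      w.length = L}.Nonempty := ⟨w.length, w, hw, hp, rfl⟩
  obtain ⟨w₀, hw₀, hp₀, hl₀⟩ := Nat.sInf_mem hTne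
  refine ⟨w₀, hw₀, hp₀, le_antisymm ?_ (altDist_le_of_alt' w₀ hw₀ hp₀)⟩
  rw [altDist]
  apply le_sInf
  rintro m ⟨w', hw', hp', rfl⟩
  have : w₀.length ≤ w'.length := hl₀ ▸ Nat.sInf_le ⟨w', hw', hp', rfl⟩
  exact_mod_cast this

lemma shortest_parity {v : V} {θ : Bool} {n : ℕ} (h : altDist G M θ f v = (n : ℕ∞)) :
    parityOf n = θ := by
  obtain ⟨w, hw, hp, hl⟩ := exists_shortest (h ▸ (by simp : ((n : ℕ∞) ≠ ⊤)))
  rw [h] at hl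
  have : w.length = n := by exact_mod_cast hl
  rw [← this, hp]

/-! ### the minimum distance `dm` -/

noncomputable def dm (G : SimpleGraph V) (M : Set (Sym2 V)) (f v : V) : ℕ∞ :=
  altDist G M (gam G M f v) f v

lemma dm_le (θ : Bool) (v : V) : dm G M f v ≤ altDist G M θ f v := by
  rw [dm, gam]
  split
  · cases θ
    · exact le_of_lt (by assumption)
    · exact le_refl _
  · cases θ
    · exact le_refl _
    · exact le_of_not_gt (by assumption)

lemma dm_ne_top {v : V}
    (hreach : altDist G M true f v ≠ ⊤ ∨ altDist G M false f v ≠ ⊤) :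
    dm G M f v ≠ ⊤ := by
  rcases hreach with h | h
  · exact fun ht => h (top_le_iff.mp (ht ▸ dm_le true v))
  · exact fun ht => h (top_le_iff.mp (ht ▸ dm_le false v))

lemma dm_parity {v : V} {n : ℕ} (h : dm G M f v = (n : ℕ∞)) :
    parityOf n = gam G M f v := shortest_parity h

lemma alt_nil : Alt M (Walk.nil : G.Walk f f) := by
  intro i h
  simp [Walk.edges_nil] at h

lemma altDist_false_self : altDist G M false f f = 0 := by
  apply le_antisymm
  · have := altDist_le_of_alt' (M := M) (θ := false) (Walk.nil : G.Walk f f)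
      ⟨Walk.IsPath.nil, alt_nil⟩ (by rw [Walk.length_nil]; rfl)
    simpa using this
  · exact zero_le

lemma gam_self : gam G M f f = false := by
  rw [gam, if_neg]
  rw [altDist_false_self]
  exact not_lt_of_ge zero_le

lemma dm_self : dm G M f f = 0 := by
  rw [dm, gam_self, altDist_false_self]

lemma eq_of_dm_zero {v : V} (h : dm G M f v = 0) : v = f := by
  obtain ⟨w, _, _, hl⟩ := exists_shortest (v := v) (θ := gam G M f v) (by rw [← dm, h]; simp)
  rw [← dm, h] at hl
  have : w.length = 0 := by exact_mod_cast hl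
  exact (Walk.eq_of_length_eq_zero this).symm

lemma one_le_dm {v : V} (h : v ≠ f) : 1 ≤ dm G M f v := by
  rw [ENat.one_le_iff_ne_zero]
  exact fun h0 => h (eq_of_dm_zero h0)

/-! ### alternation of prefixes, suffixes, appends -/

lemma alt_getElem {u v : V} {w : G.Walk u v} (h : Alt M w) (i : ℕ)
    (hi : i < w.edges.length) : w.edges[i] ∈ M ↔ i % 2 = 1 := by
  have := h i hi
  simpa [List.get_eq_getElem] using this

lemma alt_getElem' {u v : V} {w : G.Walk u v} (h : Alt M w) {i : ℕ} {e : Sym2 V}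
    (he : w.edges[i]? = some e) : e ∈ M ↔ i % 2 = 1 := by
  rw [List.getElem?_eq_some_iff] at he
  obtain ⟨hlt, rfl⟩ := he
  exact alt_getElem h i hlt

lemma alt_of_getElem? {u v : V} {w : G.Walk u v}
    (h : ∀ (i : ℕ) (e : Sym2 V), w.edges[i]? = some e → (e ∈ M ↔ i % 2 = 1)) : Alt M w := by
  intro i hi
  rw [List.get_eq_getElem]
  exact h i _ (List.getElem?_eq_some_iff.mpr ⟨hi, rfl⟩)

def AltFrom (M : Set (Sym2 V)) (k : ℕ) {u v : V} (w : G.Walk u v) : Prop :=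
  ∀ (i : ℕ) (hi : i < w.edges.length), (w.edges[i] ∈ M ↔ (k + i) % 2 = 1)

lemma alt_of_prefix {u v x : V} {w : G.Walk u v} {w₁ : G.Walk u x} {w₂ : G.Walk x v}
    (hw : w.edges = w₁.edges ++ w₂.edges) (h : Alt M w) : Alt M w₁ := by
  apply alt_of_getElem?
  intro i e he
  have hi : i < w₁.edges.length := (List.getElem?_eq_some_iff.mp he).1
  refine alt_getElem' h (i := i) ?_
  rw [hw, List.getElem?_append_left hi]
  exact he

lemma alt_of_suffix {u v x : V} {w : G.Walk u v} {w₁ : G.Walk u x} {w₂ : G.Walk x v}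
    (hw : w.edges = w₁.edges ++ w₂.edges) (h : Alt M w) : AltFrom M w₁.length w₂ := by
  intro i hi
  have he2 : w.edges[w₁.edges.length + i]? = some (w₂.edges[i]) := by
    rw [hw, List.getElem?_append_right (Nat.le_add_right _ _), Nat.add_sub_cancel_left]
    exact List.getElem?_eq_getElem hi
  have := alt_getElem' h he2
  rwa [Walk.length_edges] at this

lemma altFrom_getElem' {u v : V} {w : G.Walk u v} {k : ℕ} (h : AltFrom M k w)
    {i : ℕ} {e : Sym2 V} (he : w.edges[i]? = some e) : e ∈ M ↔ (k + i) % 2 = 1 := by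
  rw [List.getElem?_eq_some_iff] at he
  obtain ⟨hlt, rfl⟩ := he
  exact h i hlt

lemma alt_append {a b : V} {W : G.Walk f a} {S : G.Walk a b} {k : ℕ}
    (hW : Alt M W) (hS : AltFrom M k S) (hk : k % 2 = W.length % 2) :
    Alt M (W.append S) := by
  apply alt_of_getElem?
  intro i e he
  rw [Walk.edges_append] at he
  rcases Nat.lt_or_ge i W.edges.length with hlt | hge
  · rw [List.getElem?_append_left hlt] at he
    exact alt_getElem' hW he
  · rw [List.getElem?_append_right hge] at he
    obtain ⟨hj, rfl⟩ := List.getElem?_eq_some_iff.mp he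
    have := hS (i - W.edges.length) hj
    rw [this]
    have hl : W.edges.length = W.length := Walk.length_edges W
    omega

lemma alt_concat {a b : V} {W : G.Walk f a} (hW : Alt M W) (hadj : G.Adj a b)
    (hMe : s(a, b) ∈ M ↔ W.length % 2 = 1) : Alt M (W.concat hadj) := by
  apply alt_of_getElem?
  intro i e he
  rw [Walk.edges_concat, List.concat_eq_append] at he
  rcases Nat.lt_or_ge i W.edges.length with hlt | hge
  · rw [List.getElem?_append_left hlt] at he
    exact alt_getElem' hW he
  · rw [List.getElem?_append_right hge] at he
    have hi : i - W.edges.length < 1 := (List.getElem?_eq_some_iff.mp he).1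
    have hieq : i = W.edges.length := by omega
    obtain ⟨hj, rfl⟩ := List.getElem?_eq_some_iff.mp he
    simp only [List.getElem_singleton]
    rw [hieq, Walk.length_edges]
    exact hMe

lemma concat_last_status {c a : V} {Q₂ : G.Walk f c} {hadj : G.Adj c a}
    (hA : Alt M (Q₂.concat hadj)) : (s(c, a) ∈ M ↔ Q₂.length % 2 = 1) := by
  have he : (Q₂.concat hadj).edges[Q₂.edges.length]? = some s(c, a) := by
    rw [Walk.edges_concat, List.concat_eq_append,
      List.getElem?_append_right (le_refl _), Nat.sub_self]
    rfl
  have := alt_getElem' hA he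
  rwa [Walk.length_edges] at this

/-! ### paths: append, concat, loops -/

lemma isPath_append {a b : V} {W : G.Walk f a} {S : G.Walk a b}
    (hW : W.IsPath) (hS : S.IsPath)
    (hdisj : ∀ x ∈ W.support, x ∈ S.support → x = a) : (W.append S).IsPath := by
  rw [Walk.isPath_def, Walk.support_append]
  have hS' : S.support = a :: S.support.tail := S.support_eq_cons
  have hnd : S.support.Nodup := hS.support_nodup
  rw [hS'] at hnd
  rcases List.nodup_cons.mp hnd with ⟨hatail, htail⟩
  apply List.Nodup.append hW.support_nodup htail
  intro x hx hx'
  have : x = a := hdisj x hx (by rw [hS']; exact List.mem_cons_of_mem _ hx')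
  exact hatail (this ▸ hx')

lemma loop_path_length {a : V} {R : G.Walk a a} (h : R.IsPath) : R.length = 0 := by
  cases R with
  | nil => rfl
  | cons hadj R' =>
    exfalso
    have := h.support_nodup
    rw [Walk.support_cons] at this
    exact (List.nodup_cons.mp this).1 R'.end_mem_support

lemma exists_concat {x y : V} (w : G.Walk x y) (h : w.length ≠ 0) :
    ∃ (c : V) (w₂ : G.Walk x c) (hadj : G.Adj c y), w = w₂.concat hadj := by
  cases hw : w.reverse with
  | nil =>
    exfalso
    have := congrArg Walk.length hw
    rw [Walk.length_reverse] at this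
    exact h this
  | cons hadj w' =>
    refine ⟨_, w'.reverse, hadj.symm, ?_⟩
    rw [← Walk.reverse_reverse w, hw, Walk.reverse_cons]
    exact (Walk.concat_eq_append _ _).symm

/-! ### positions on walks -/

lemma take_drop_length {u v x : V} (w : G.Walk u v) (h : x ∈ w.support) :
    w.length = (w.takeUntil x h).length + (w.dropUntil x h).length := by
  have := congrArg Walk.length (w.take_spec h)
  rwa [Walk.length_append, eq_comm] at this

lemma edges_take_drop {u v x : V} (w : G.Walk u v) (h : x ∈ w.support) :
    w.edges = (w.takeUntil x h).edges ++ (w.dropUntil x h).edges := by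
  have := congrArg Walk.edges (w.take_spec h)
  rwa [Walk.edges_append, eq_comm] at this

lemma dist_le_position {v u : V} {w : G.Walk f v} (hw : IsAltPath G M w)
    (hu : u ∈ w.support) :
    altDist G M (parityOf (w.takeUntil u hu).length) f u ≤ (w.takeUntil u hu).length :=
  altDist_le_of_alt _ ⟨hw.1.takeUntil hu, alt_of_prefix (edges_take_drop w hu) hw.2⟩

lemma dm_le_position {v u : V} {w : G.Walk f v} (hw : IsAltPath G M w)
    (hu : u ∈ w.support) : dm G M f u ≤ ((w.takeUntil u hu).length : ℕ∞) :=
  le_trans (dm_le _ u) (dist_le_position hw hu)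

/-! ### subtree lemmas -/

variable {T : AltBaseTree G M f}

lemma insub_refl (a : V) : T.InSubtree a a := ⟨0, rfl⟩

lemma iterate_parent_f (n : ℕ) : T.parent^[n] f = f :=
  Function.iterate_fixed T.parent_root n

lemma eq_f_of_insub_f {a : V} (h : T.InSubtree a f) : a = f := by
  obtain ⟨n, hn⟩ := h
  rw [iterate_parent_f] at hn
  exact hn.symm

lemma insub_parent_mem {a v : V} (h : T.InSubtree a v) (hv : v ≠ a) :
    T.InSubtree a (T.parent v) := by
  obtain ⟨n, hn⟩ := h
  cases n with
  | zero => exact absurd hn hv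
  | succ m => exact ⟨m, by rwa [Function.iterate_succ_apply] at hn⟩

lemma insub_of_parent {a v : V} (h : T.InSubtree a (T.parent v)) : T.InSubtree a v := by
  obtain ⟨n, hn⟩ := h
  exact ⟨n + 1, by rwa [Function.iterate_succ_apply]⟩

lemma insub_trans {s t v : V} (h1 : T.InSubtree s t) (h2 : T.InSubtree t v) :
    T.InSubtree s v := by
  obtain ⟨m, hm⟩ := h1
  obtain ⟨n, hn⟩ := h2
  exact ⟨m + n, by rw [Function.iterate_add_apply, hn, hm]⟩

lemma parent_not_insub {a : V} (ha : a ≠ f) : ¬ T.InSubtree a (T.parent a) := by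
  rintro ⟨k, hk⟩
  have hcyc : T.parent^[k + 1] a = a := by rwa [Function.iterate_succ_apply]
  have hmul : ∀ j : ℕ, T.parent^[j * (k + 1)] a = a := by
    intro j
    induction j with
    | zero => simp
    | succ i ih =>
      rw [Nat.succ_mul, Function.iterate_add_apply, hcyc, ih]
  obtain ⟨m, hm⟩ := T.parent_reaches a
  have hle : m ≤ m * (k + 1) := Nat.le_mul_of_pos_right m (Nat.succ_pos k)
  have : T.parent^[m * (k + 1)] a = f := by
    obtain ⟨d, hd⟩ := Nat.exists_eq_add_of_le hle
    rw [hd, add_comm, Function.iterate_add_apply, hm, iterate_parent_f]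
  rw [hmul m] at this
  exact ha this

lemma parent_ne_self {a : V} (ha : a ≠ f) : T.parent a ≠ a := by
  intro h
  exact parent_not_insub ha (by rw [h]; exact insub_refl _)

/-! ### the depth lemma -/

noncomputable def tdepth (T : AltBaseTree G M f) (t v : V) : ℕ :=
  sInf {k : ℕ | T.parent^[k] v = t}

lemma tdepth_self (t : V) : tdepth T t t = 0 :=
  Nat.le_zero.mp (Nat.sInf_le rfl)

lemma tdepth_pos {t v : V} (h : T.InSubtree t v) (hv : v ≠ t) : 1 ≤ tdepth T t v := by
  rcases Nat.eq_zero_or_pos (tdepth T t v) with h0 | h1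
  · exfalso
    have hmem : T.parent^[tdepth T t v] v = t := Nat.sInf_mem h
    rw [h0] at hmem
    exact hv hmem
  · exact h1

lemma depth_le_dm : ∀ (n : ℕ) (v : V), T.parent^[n] v = t →
    ((tdepth T t v : ℕ) : ℕ∞) + dm G M f t ≤ dm G M f v := by
  intro n
  induction n with
  | zero =>
    intro v hv
    rw [Function.iterate_zero_apply] at hv
    subst hv
    rw [tdepth_self]
    simp
  | succ n ih =>
    intro v hv
    by_cases hvt : v = t
    · subst hvt
      rw [tdepth_self]; simp
    · have hvf : v ≠ f := by
        intro h
        subst h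
        rw [iterate_parent_f] at hv
        exact hvt hv
      have hv' : T.parent^[n] (T.parent v) = t := by
        rwa [Function.iterate_succ_apply] at hv
      have IH := ih (T.parent v) hv'
      have hdm : dm G M f (T.parent v) + 1 ≤ dm G M f v := by
        have h1 : dm G M f v = altDist G M (!gam G M f v) f (T.parent v) + 1 :=
          T.dist_eq v hvf
        rw [h1]
        exact add_le_add_left (dm_le _ _) 1
      have hmem : T.parent^[tdepth T t (T.parent v)] (T.parent v) = t :=
        Nat.sInf_mem (⟨n, hv'⟩ : Set.Nonempty {k : ℕ | T.parent^[k] (T.parent v) = t})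
      have hstep : tdepth T t v ≤ tdepth T t (T.parent v) + 1 := by
        apply Nat.sInf_le
        show T.parent^[tdepth T t (T.parent v) + 1] v = t
        rw [Function.iterate_succ_apply]
        exact hmem
      calc ((tdepth T t v : ℕ) : ℕ∞) + dm G M f t
          ≤ ((tdepth T t (T.parent v) + 1 : ℕ) : ℕ∞) + dm G M f t := by
            apply add_le_add_left
            exact_mod_cast hstep
        _ = ((tdepth T t (T.parent v) : ℕ) : ℕ∞) + dm G M f t + 1 := by
            push_cast; ring
        _ ≤ dm G M f (T.parent v) + 1 := add_le_add_left IH 1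
        _ ≤ dm G M f v := hdm

lemma insub_depth_le_dm {t v : V} (h : T.InSubtree t v) :
    ((tdepth T t v : ℕ) : ℕ∞) + dm G M f t ≤ dm G M f v := by
  obtain ⟨n, hn⟩ := h
  exact depth_le_dm n v hn

lemma subtree_dm_lt {a v : V} (h : T.InSubtree a v) (hv : v ≠ a) :
    dm G M f a + 1 ≤ dm G M f v := by
  have h1 := tdepth_pos h hv
  calc dm G M f a + 1 = 1 + dm G M f a := by rw [add_comm]
    _ ≤ ((tdepth T a v : ℕ) : ℕ∞) + dm G M f a := by
        apply add_le_add_left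
        exact_mod_cast h1
    _ ≤ dm G M f v := insub_depth_le_dm h

lemma subtree_dm_le {a v : V} (h : T.InSubtree a v) : dm G M f a ≤ dm G M f v := by
  by_cases hv : v = a
  · subst hv; exact le_refl _
  · exact le_trans (le_add_right (le_refl _)) (subtree_dm_lt h hv)

/-! ### crossing machinery -/

lemma exists_cross_edge {Pr : V → Prop} :
    ∀ {x y : V} (w : G.Walk x y), Pr x → ¬ Pr y →
    ∃ c d : V, s(c, d) ∈ w.edges ∧ Pr c ∧ ¬ Pr d := by
  intro x y w
  induction w with
  | nil => intro h h'; exact absurd h h'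
  | @cons u m v hadj w ih =>
    intro hx hy
    by_cases h2 : Pr m
    · obtain ⟨c, d, hm, hc, hd⟩ := ih h2 hy
      exact ⟨c, d, by rw [Walk.edges_cons]; exact List.mem_cons_of_mem _ hm, hc, hd⟩
    · exact ⟨u, m, by rw [Walk.edges_cons]; exact List.mem_cons_self, hx, h2⟩

lemma mem_support_of_mem_edges' {v x y : V} {p : G.Walk x y} {e : Sym2 V}
    (he : e ∈ p.edges) (hv : v ∈ e) : v ∈ p.support := by
  induction e using Sym2.ind with
  | _ u w =>
    rcases Sym2.mem_iff.mp hv with rfl | rfl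
    · exact p.fst_mem_support_of_mem_edges he
    · exact p.snd_mem_support_of_mem_edges he

lemma first_edge_mem {a y : V} (R : G.Walk a y) (hR : R.IsPath) {e : Sym2 V}
    (he : e ∈ R.edges) (hae : a ∈ e) :
    ∃ (c : V) (hadj : G.Adj a c) (R' : G.Walk c y), R = Walk.cons hadj R' ∧ e = s(a, c) := by
  cases R with
  | nil => simp [Walk.edges_nil] at he
  | @cons u m v hadj R' =>
    rw [Walk.edges_cons] at he
    rcases List.mem_cons.mp he with rfl | hmem
    · rcases Sym2.mem_iff.mp hae with h1 | h2
      · exact ⟨m, hadj, R', rfl, rfl⟩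
      · exfalso
        have hnd := hR.support_nodup
        rw [Walk.support_cons] at hnd
        have h3 := (List.nodup_cons.mp hnd).1
        rw [h2] at h3
        exact h3 R'.start_mem_support
    · exfalso
      have hnd := hR.support_nodup
      rw [Walk.support_cons] at hnd
      have h3 := (List.nodup_cons.mp hnd).1
      exact h3 (mem_support_of_mem_edges' hmem hae)

lemma last_edge_mem {x a : V} (Q : G.Walk x a) (hQ : Q.IsPath) {e : Sym2 V}
    (he : e ∈ Q.edges) (hae : a ∈ e) :
    ∃ (c : V) (Q₂ : G.Walk x c) (hadj : G.Adj c a), Q = Q₂.concat hadj ∧ e = s(c, a) := by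
  have he' : e ∈ Q.reverse.edges := by
    rw [Walk.edges_reverse, List.mem_reverse]; exact he
  obtain ⟨c, hadj, R', hRQ, heq⟩ := first_edge_mem Q.reverse hQ.reverse he' hae
  refine ⟨c, R'.reverse, hadj.symm, ?_, by rw [heq, Sym2.eq_swap]⟩
  rw [← Walk.reverse_reverse Q, hRQ, Walk.reverse_cons]
  exact (Walk.concat_eq_append _ _).symm

lemma tree_crossing {a x y : V} {e : Sym2 V} (hE : T.IsTreeEdge e)
    (hx : ¬ T.InSubtree a x) (hy : T.InSubtree a y) (he : e = s(x, y)) :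
    x = T.parent a ∧ y = a := by
  obtain ⟨w, hwf, rfl⟩ := hE
  rcases Sym2.eq_iff.mp he with ⟨h1, h2⟩ | ⟨h1, h2⟩
  · -- parent w = x, w = y
    by_cases hwa : w = a
    · exact ⟨by rw [← h1, hwa], by rw [← h2, hwa]⟩
    · exfalso
      apply hx
      rw [← h1]
      exact insub_parent_mem (by rw [h2]; exact hy) hwa
  · -- parent w = y, w = x
    exfalso
    apply hx
    rw [← h2]
    exact insub_of_parent (by rw [h1]; exact hy)

/-- The main structural lemma: if a path from `f` contains `a ≠ f` and uses no
outgoing edges of `T_a`, then it enters `T_a` exactly once, via the tree edge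
`(parent a, a)`, and its suffix from `a` stays in `T_a`. -/
lemma suffix_in_subtree {a b : V} {P : G.Walk f b}
    (hP : P.IsPath) (haf : a ≠ f)
    (hban : ∀ e ∈ P.edges, ¬ T.IsOutgoing a e)
    (ha : a ∈ P.support) :
    (∃ (Q₂ : G.Walk f (T.parent a)) (hadj : G.Adj (T.parent a) a),
       P.takeUntil a ha = Q₂.concat hadj) ∧
    (∀ x ∈ (P.dropUntil a ha).support, T.InSubtree a x) := by
  have hedges : P.edges = (P.takeUntil a ha).edges ++ (P.dropUntil a ha).edges :=
    edges_take_drop P ha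
  have cross_tree : ∀ e ∈ P.edges, ∀ c d : V, e = s(c, d) → ¬ T.InSubtree a c →
      T.InSubtree a d → (c = T.parent a ∧ d = a) := by
    intro e he c d hcd hc hd
    have hmemE : e ∈ G.edgeSet := P.edges_subset_edgeSet he
    have htree : T.IsTreeEdge e := by
      by_contra hnt
      exact hban e he ⟨hmemE, hnt, c, d, hcd, hc, hd⟩
    exact tree_crossing htree hc hd hcd
  have hfni : ¬ T.InSubtree a f := fun h => haf (eq_f_of_insub_f h)
  -- the prefix ends with the tree edge
  have hQ : ∃ (Q₂ : G.Walk f (T.parent a)) (hadj : G.Adj (T.parent a) a),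
      P.takeUntil a ha = Q₂.concat hadj := by
    obtain ⟨c, d, hm, hc, hd⟩ :=
      exists_cross_edge (Pr := fun x => ¬ T.InSubtree a x) (P.takeUntil a ha)
        hfni (by simp [insub_refl])
    have hd' : T.InSubtree a d := not_not.mp hd
    have hmP : s(c, d) ∈ P.edges := by rw [hedges]; exact List.mem_append_left _ hm
    obtain ⟨hc1, hd1⟩ := cross_tree _ hmP c d rfl hc hd'
    rw [hc1, hd1] at hm
    obtain ⟨c', Q₂, hadj, hQeq, heq⟩ :=
      last_edge_mem (P.takeUntil a ha) (hP.takeUntil ha) hm (Sym2.mem_mk_right _ _)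
    have hc' : c' = T.parent a := by
      rcases Sym2.eq_iff.mp heq.symm with ⟨h1, _⟩ | ⟨h1, h2⟩
      · exact h1
      · exfalso
        apply parent_not_insub haf
        rw [← h2]
        exact insub_refl a
    subst hc'
    exact ⟨Q₂, hadj, hQeq⟩
  refine ⟨hQ, ?_⟩
  -- the suffix stays inside
  intro x hx
  by_contra hxn
  have hcross2 : ∃ c d : V, s(c, d) ∈ (P.dropUntil a ha).edges ∧
      T.InSubtree a c ∧ ¬ T.InSubtree a d := by
    obtain ⟨c, d, hm, hc, hd⟩ :=
      exists_cross_edge (Pr := fun z => T.InSubtree a z)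
        ((P.dropUntil a ha).takeUntil x hx) (insub_refl a) hxn
    refine ⟨c, d, ?_, hc, hd⟩
    rw [edges_take_drop (P.dropUntil a ha) hx]
    exact List.mem_append_left _ hm
  obtain ⟨c, d, hm, hc, hd⟩ := hcross2
  have hmP : s(c, d) ∈ P.edges := by rw [hedges]; exact List.mem_append_right _ hm
  obtain ⟨hd1, hc1⟩ := cross_tree _ hmP d c (Sym2.eq_swap) hd hc
  rw [hc1, hd1] at hm
  -- the tree edge appears in both prefix and suffix: contradiction with Nodup
  obtain ⟨Q₂, hadj, hQeq⟩ := hQ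
  have hmQ : s(T.parent a, a) ∈ (P.takeUntil a ha).edges := by
    rw [hQeq, Walk.edges_concat, List.concat_eq_append]
    exact List.mem_append_right _ (List.mem_singleton_self _)
  have hnd : P.edges.Nodup := hP.isTrail.edges_nodup
  rw [hedges] at hnd
  have hdisj := (List.nodup_append'.mp hnd).2.2
  exact hdisj hmQ (by rwa [Sym2.eq_swap] at hm)

/-! ### levels -/

lemma le_foldr_max {α : Type*} [LinearOrder α] {x : α} {l : List α} (b : α)
    (h : x ∈ l) : x ≤ l.foldr max b := by
  induction l with
  | nil => simp at h
  | cons y l ih =>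
    rcases List.mem_cons.mp h with rfl | h'
    · exact le_max_left _ _
    · exact le_trans (ih h') (le_max_right _ _)

lemma edge_le_walkLevel {x y : V} {P : G.Walk x y} {e : Sym2 V} (he : e ∈ P.edges) :
    level T e ≤ walkLevel T P :=
  le_foldr_max _ (List.mem_map_of_mem (f := level T) he)

lemma ban_of_level {out : V → Sym2 V} (hmoe : IsMOE T out) {a x y : V} {P : G.Walk x y}
    (hlev : walkLevel T P < outLevel T out a) : ∀ e ∈ P.edges, ¬ T.IsOutgoing a e := by
  intro e he ho
  have hex : ∃ e, T.IsOutgoing a e := ⟨e, ho⟩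
  rw [outLevel, if_pos hex] at hlev
  have h1 : level T (out a) ≤ level T e := (hmoe a hex).2 e ho
  have h2 : level T e ≤ walkLevel T P := edge_le_walkLevel he
  exact absurd (h2.trans_lt (hlev.trans_le h1)) (lt_irrefl _)

/-! ### avoidance, the K lemma, matched last edges -/

lemma coe_ne_top' {n : ℕ} : ((n : ℕ) : ℕ∞) ≠ ⊤ := by simp

lemma exists_nat_eq {x : ℕ∞} (h : x ≠ ⊤) : ∃ m : ℕ, (m : ℕ∞) = x := by
  lift x to ℕ using h
  exact ⟨x, rfl⟩

lemma dm_eq_false {v : V} (h : gam G M f v = false) :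
    dm G M f v = altDist G M false f v := by unfold dm; rw [h]

lemma dm_eq_true {v : V} (h : gam G M f v = true) :
    dm G M f v = altDist G M true f v := by unfold dm; rw [h]

lemma altFrom_single {a b : V} {k : ℕ} (hadj : G.Adj a b)
    (hstat : s(a, b) ∈ M ↔ k % 2 = 1) :
    AltFrom M k (Walk.cons hadj Walk.nil) := by
  intro i hi
  simp only [Walk.edges_cons, Walk.edges_nil, List.length_cons, List.length_nil] at hi
  have h0 : i = 0 := by omega
  subst h0
  simpa using hstat

lemma avoid (hreach : ∀ v : V, altDist G M true f v ≠ ⊤ ∨ altDist G M false f v ≠ ⊤)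
    {a x : V} {W : G.Walk f a} (hW : IsAltPath G M W)
    (hlen : (W.length : ℕ∞) ≤ dm G M f a)
    (hx : x ∈ W.support) (hxT : T.InSubtree a x) : x = a := by
  by_contra hne
  have h1 : dm G M f a + 1 ≤ dm G M f x := subtree_dm_lt hxT hne
  have h2 : dm G M f x ≤ ((W.takeUntil x hx).length : ℕ∞) := dm_le_position hW hx
  have h3 : W.length = (W.takeUntil x hx).length + (W.dropUntil x hx).length :=
    take_drop_length W hx
  have h4 : (W.dropUntil x hx).length ≠ 0 := by
    intro h0
    exact hne (Walk.eq_of_length_eq_zero h0)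
  obtain ⟨da, hda⟩ := exists_nat_eq (dm_ne_top (hreach a))
  rw [← hda] at h1 hlen
  have h5 : da + 1 ≤ dm G M f x := by exact_mod_cast h1
  have h6 : ((da + 1 : ℕ) : ℕ∞) ≤ ((W.takeUntil x hx).length : ℕ∞) := by
    push_cast
    exact le_trans h5 h2
  have h7 : da + 1 ≤ (W.takeUntil x hx).length := by exact_mod_cast h6
  have h8 : W.length ≤ da := by exact_mod_cast hlen
  omega

lemma K_lemma (hM : IsMatching G M) (hf : Unmatched M f)
    (hreach : ∀ v : V, altDist G M true f v ≠ ⊤ ∨ altDist G M false f v ≠ ⊤)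
    {a : V} (haf : a ≠ f) (hg : gam G M f a = true)
    (hpe : s(T.parent a, a) ∈ M) : False := by
  obtain ⟨da, hda⟩ := exists_nat_eq (dm_ne_top (hreach a))
  have hpar : parityOf da = true := by rw [dm_parity hda.symm, hg]
  have hodd : da % 2 = 1 := parityOf_true_iff.mp hpar
  have heq : altDist G M false f (T.parent a) + 1 = (da : ℕ∞) := by
    have h1 := T.dist_eq a haf
    rw [hg] at h1
    simp only [Bool.not_true] at h1
    rw [← h1, ← hg]
    exact hda.symm
  have hne : altDist G M false f (T.parent a) ≠ ⊤ := by
    intro h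
    rw [h] at heq
    simp at heq
  obtain ⟨m, hm⟩ := exists_nat_eq hne
  have hm1 : m + 1 = da := by
    rw [← hm] at heq
    exact_mod_cast heq
  have hmpar : parityOf m = false := shortest_parity hm.symm
  have hmeven : m % 2 = 0 := parityOf_false_iff.mp hmpar
  by_cases hm0 : m = 0
  · -- parent a = f, so f is matched: contradiction
    obtain ⟨U, hU⟩ := exists_shortest (v := T.parent a) (θ := false)
      (by rw [← hm]; exact coe_ne_top')
    have hU0 : U.length = 0 := by
      have := hU.2.2
      rw [← hm, hm0] at this
      exact_mod_cast this
    have hfp : f = T.parent a := Walk.eq_of_length_eq_zero hU0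
    apply hf s(T.parent a, a) hpe
    rw [← hfp]
    exact Sym2.mem_mk_left _ _
  · obtain ⟨U, hU⟩ := exists_shortest (v := T.parent a) (θ := false)
      (by rw [← hm]; exact coe_ne_top')
    have hUlen : U.length = m := by
      have := hU.2.2
      rw [← hm] at this
      exact_mod_cast this
    obtain ⟨c, U₂, hadj, hUeq⟩ := exists_concat U (by omega)
    have hU₂len : U₂.length = m - 1 := by
      have := congrArg Walk.length hUeq
      rw [Walk.length_concat, hUlen] at this
      omega
    have hAltU : Alt M (U₂.concat hadj) := hUeq ▸ hU.1.2
    have hlast : s(c, T.parent a) ∈ M :=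
      (concat_last_status hAltU).mpr (by omega)
    have heq2 : s(c, T.parent a) = s(T.parent a, a) := by
      by_contra hne2
      exact hM.2 _ hlast _ hpe hne2 (T.parent a)
        (Sym2.mem_mk_right _ _) (Sym2.mem_mk_left _ _)
    have hca : c = a := by
      rcases Sym2.eq_iff.mp heq2 with ⟨h1, _⟩ | ⟨h1, _⟩
      · exact absurd h1 hadj.ne
      · exact h1
    have hmemU : s(c, T.parent a) ∈ U.edges := by
      rw [hUeq, Walk.edges_concat, List.concat_eq_append]
      exact List.mem_append_right _ (List.mem_singleton_self _)
    have haU : a ∈ U.support :=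
      mem_support_of_mem_edges' hmemU (by rw [hca]; exact Sym2.mem_mk_left _ _)
    have h5 := dm_le_position hU.1 haU
    have h6 : (U.takeUntil a haU).length ≤ U.length := Walk.length_takeUntil_le U haU
    rw [← hda] at h5
    have h7 : da ≤ (U.takeUntil a haU).length := by exact_mod_cast h5
    omega

lemma matched_last (hM : IsMatching G M) {a : V} (haf : a ≠ f) {n : ℕ}
    (hn : altDist G M false f a = (n : ℕ∞)) :
    ∃ (c : V) (W : G.Walk f a), IsShortestAlt G M false f a W ∧ W.length = n ∧
      s(c, a) ∈ M ∧ s(c, a) ∈ W.edges ∧ c ≠ a := by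
  obtain ⟨W, hW⟩ := exists_shortest (by rw [hn]; exact coe_ne_top')
  have hlen : W.length = n := by
    have := hW.2.2
    rw [hn] at this
    exact_mod_cast this
  have hn0 : W.length ≠ 0 := fun h0 => haf (Walk.eq_of_length_eq_zero h0).symm
  have hmod : W.length % 2 = 0 := parityOf_false_iff.mp hW.2.1
  obtain ⟨c, W₂, hadj, hWeq⟩ := exists_concat W hn0
  have hW₂len : W₂.length = W.length - 1 := by
    have := congrArg Walk.length hWeq
    rw [Walk.length_concat] at this
    omega
  have hAlt : Alt M (W₂.concat hadj) := hWeq ▸ hW.1.2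
  have hlast : s(c, a) ∈ M := (concat_last_status hAlt).mpr (by omega)
  have hmem : s(c, a) ∈ W.edges := by
    rw [hWeq, Walk.edges_concat, List.concat_eq_append]
    exact List.mem_append_right _ (List.mem_singleton_self _)
  exact ⟨c, W, hW, hlen, hlast, hmem, hadj.ne⟩

/-! ### structure of banned paths ending at the anchor -/

lemma endpoint_structure {a : V} {P : G.Walk f a} (hPath : P.IsPath) (hAlt : Alt M P)
    (haf : a ≠ f) (hban : ∀ e ∈ P.edges, ¬ T.IsOutgoing a e) :
    1 ≤ P.length ∧ (s(T.parent a, a) ∈ M ↔ (P.length - 1) % 2 = 1) := by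
  have ha : a ∈ P.support := P.end_mem_support
  obtain ⟨⟨Q₂, hadj, hQeq⟩, _⟩ := suffix_in_subtree hPath haf hban ha
  have hR0 : (P.dropUntil a ha).length = 0 := loop_path_length (hPath.dropUntil ha)
  have htd := take_drop_length P ha
  have hQlen : (P.takeUntil a ha).length = Q₂.length + 1 := by
    rw [hQeq, Walk.length_concat]
  have hAltQ : Alt M (P.takeUntil a ha) := alt_of_prefix (edges_take_drop P ha) hAlt
  have hstat := concat_last_status (hQeq ▸ hAltQ)
  refine ⟨by omega, ?_⟩
  rw [show P.length - 1 = Q₂.length by omega]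
  exact hstat

/-! ### the prefix lemma -/

lemma prefix_eq_dm (hM : IsMatching G M) (hf : Unmatched M f)
    (hreach : ∀ v : V, altDist G M true f v ≠ ⊤ ∨ altDist G M false f v ≠ ⊤)
    {θ : Bool} {a b : V} {P : G.Walk f b} (hP : IsShortestAlt G M θ f b P)
    (ha : a ∈ P.support) (haf : a ≠ f) (hba : b ≠ a)
    (hban : ∀ e ∈ P.edges, ¬ T.IsOutgoing a e) :
    ((P.takeUntil a ha).length : ℕ∞) = dm G M f a ∧
      parityOf (P.takeUntil a ha).length = gam G M f a := by
  obtain ⟨⟨Q₂, hadjQ, hQeq⟩, hRsub⟩ := suffix_in_subtree hP.1.1 haf hban ha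
  have hPath := hP.1.1
  have hAltP := hP.1.2
  have hedges := edges_take_drop P ha
  have hAltQ : Alt M (P.takeUntil a ha) := alt_of_prefix hedges hAltP
  set p := (P.takeUntil a ha).length with hp
  have hQlen : p = Q₂.length + 1 := by rw [hp, hQeq, Walk.length_concat]
  have htree : s(T.parent a, a) ∈ M ↔ Q₂.length % 2 = 1 :=
    concat_last_status (hQeq ▸ hAltQ)
  have hAltR : AltFrom M p (P.dropUntil a ha) := by
    rw [hp]
    exact alt_of_suffix hedges hAltP
  obtain ⟨x₁, hadj₀, R', hReq⟩ := Walk.exists_eq_cons_of_ne (Ne.symm hba) (P.dropUntil a ha)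
  have hx₁T : T.InSubtree a x₁ := by
    apply hRsub
    rw [hReq, Walk.support_cons]
    exact List.mem_cons_of_mem _ R'.start_mem_support
  have he₀ : s(a, x₁) ∈ M ↔ p % 2 = 1 := by
    have hget : (P.dropUntil a ha).edges[0]? = some s(a, x₁) := by
      rw [hReq, Walk.edges_cons]
      simp
    have := altFrom_getElem' hAltR hget
    simpa using this
  obtain ⟨da, hda⟩ := exists_nat_eq (dm_ne_top (hreach a))
  have hpar_da : parityOf da = gam G M f a := dm_parity hda.symm
  have hdm_eq : altDist G M (gam G M f a) f a = ((da : ℕ) : ℕ∞) := hda.symm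
  obtain ⟨W, hWs⟩ := exists_shortest (by rw [hdm_eq]; exact coe_ne_top')
  have hWlen : W.length = da := by
    have := hWs.2.2
    rw [hdm_eq] at this
    exact_mod_cast this
  have havoid : ∀ x ∈ W.support, T.InSubtree a x → x = a := by
    intro x hx hxT
    exact avoid hreach hWs.1 (by rw [hWlen, hda]) hx hxT
  -- parity claim
  have hpargam : parityOf p = gam G M f a := by
    by_contra hcon
    rcases hgam : gam G M f a with _ | _
    · -- gam a = false, so p is odd and the first suffix edge is matched
      rw [hgam] at hcon
      have hpodd : p % 2 = 1 := by
        rcases hq : parityOf p with _ | _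
        · exact absurd hq hcon
        · exact parityOf_true_iff.mp hq
      have he₀M : s(a, x₁) ∈ M := he₀.mpr hpodd
      have hda0 : da ≠ 0 := by
        intro h0
        apply haf
        apply eq_of_dm_zero
        rw [← hda, h0]
        rfl
      have hnfalse : altDist G M false f a = ((da : ℕ) : ℕ∞) := by
        rw [← hgam]; exact hdm_eq
      obtain ⟨c₂, W₂, hW₂s, hW₂len, hce, hcemem, hcne⟩ := matched_last hM haf hnfalse
      have heq2 : s(c₂, a) = s(a, x₁) := by
        by_contra hne2
        exact hM.2 _ hce _ he₀M hne2 a (Sym2.mem_mk_right _ _) (Sym2.mem_mk_left _ _)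
      have hc2x : c₂ = x₁ := by
        rcases Sym2.eq_iff.mp heq2 with ⟨h1, _⟩ | ⟨h1, _⟩
        · exact absurd h1 hcne
        · exact h1
      have hx₁W : x₁ ∈ W₂.support :=
        mem_support_of_mem_edges' hcemem (by rw [hc2x]; exact Sym2.mem_mk_left _ _)
      have : x₁ = a := by
        apply avoid hreach hW₂s.1 _ hx₁W hx₁T
        rw [hW₂len, hda]
      exact hadj₀.ne this.symm
    · -- gam a = true, so p is even and the tree edge is matched: K lemma
      rw [hgam] at hcon
      have hpeven : p % 2 = 0 := by
        rcases hq : parityOf p with _ | _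
        · exact parityOf_false_iff.mp hq
        · exact absurd hq hcon
      have htreeM : s(T.parent a, a) ∈ M := htree.mpr (by omega)
      exact K_lemma hM hf hreach haf hgam htreeM
  -- length claim
  have hge : dm G M f a ≤ (p : ℕ∞) := by
    have h1 : altDist G M (parityOf p) f a ≤ (p : ℕ∞) :=
      altDist_le_of_alt (P.takeUntil a ha) ⟨hPath.takeUntil ha, hAltQ⟩
    rw [hpargam] at h1
    exact h1
  have hle : (p : ℕ∞) ≤ dm G M f a := by
    have hmod : p % 2 = da % 2 :=
      mod_eq_of_parityOf_eq (by rw [hpargam, hpar_da])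
    have hWSpath : (W.append (P.dropUntil a ha)).IsPath :=
      isPath_append hWs.1.1 (hPath.dropUntil ha)
        (fun x hxW hxR => havoid x hxW (hRsub x hxR))
    have hWSalt : Alt M (W.append (P.dropUntil a ha)) :=
      alt_append hWs.1.2 hAltR (by omega)
    have hlen_eq : P.length = p + (P.dropUntil a ha).length := take_drop_length P ha
    have hWSlen : (W.append (P.dropUntil a ha)).length = da + (P.dropUntil a ha).length := by
      rw [Walk.length_append, hWlen]
    have hparWS : parityOf (W.append (P.dropUntil a ha)).length = θ := by
      rw [hWSlen]
      rw [← hP.2.1, hlen_eq]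
      exact parityOf_eq_of_mod_eq (by omega)
    have haltle := altDist_le_of_alt' _ ⟨hWSpath, hWSalt⟩ hparWS
    rw [hWSlen] at haltle
    have hPlen : (P.length : ℕ∞) = altDist G M θ f b := hP.2.2
    have : ((p + (P.dropUntil a ha).length : ℕ) : ℕ∞) ≤
        ((da + (P.dropUntil a ha).length : ℕ) : ℕ∞) := by
      rw [← hlen_eq, hPlen]
      exact_mod_cast haltle
    have hfin : p ≤ da := by
      have := (Nat.cast_le (α := ℕ∞)).mp this
      omega
    rw [← hda]
    exact_mod_cast hfin
  exact ⟨le_antisymm hle hge, hpargam⟩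

/-! ### existence of an outgoing edge at `t` -/

lemma outgoing_exists (hM : IsMatching G M) (hf : Unmatched M f)
    (hreach : ∀ v : V, altDist G M true f v ≠ ⊤ ∨ altDist G M false f v ≠ ⊤)
    {out : V → Sym2 V} {s t : V} (htf : t ≠ f)
    (hext : ∃ P₀ : G.Walk f t, IsExtension T out (!gam G M f t) s P₀) :
    ∃ e, T.IsOutgoing t e := by
  by_contra hno
  push_neg at hno
  obtain ⟨P₀, hshort₀, _, _⟩ := hext
  have hban : ∀ e ∈ P₀.edges, ¬ T.IsOutgoing t e := fun e _ => hno e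
  obtain ⟨h1len, hstat⟩ := endpoint_structure hshort₀.1.1 hshort₀.1.2 htf hban
  have hparP := hshort₀.2.1
  rcases hgt : gam G M f t with _ | _
  · -- gam t = false
    rw [hgt] at hparP
    have hodd : P₀.length % 2 = 1 := parityOf_true_iff.mp (by simpa using hparP)
    have htreeNM : s(T.parent t, t) ∉ M := by
      intro hm
      have := hstat.mp hm
      omega
    obtain ⟨dt, hdt⟩ := exists_nat_eq (dm_ne_top (hreach t))
    have hnf : altDist G M false f t = ((dt : ℕ) : ℕ∞) := by rw [← hgt]; exact hdt.symm
    obtain ⟨c, W, hWs, hWlen, hce, hcemem, hcne⟩ := matched_last hM htf hnf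
    have hcT : ¬ T.InSubtree t c := by
      intro hcT
      exact hcne (avoid hreach hWs.1 (by rw [hWlen, hdt])
        (mem_support_of_mem_edges' hcemem (Sym2.mem_mk_left _ _)) hcT)
    have hedge : s(c, t) ∈ G.edgeSet := W.edges_subset_edgeSet hcemem
    have hnt : ¬ T.IsTreeEdge s(c, t) := by
      intro htr
      obtain ⟨h1, _⟩ := tree_crossing htr hcT (insub_refl t) rfl
      rw [h1] at hce
      exact htreeNM hce
    exact hno s(c, t) ⟨hedge, hnt, c, t, rfl, hcT, insub_refl t⟩
  · -- gam t = true
    rw [hgt] at hparP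
    have heven : P₀.length % 2 = 0 := parityOf_false_iff.mp (by simpa using hparP)
    have htreeM : s(T.parent t, t) ∈ M := hstat.mpr (by omega)
    exact K_lemma hM hf hreach htf hgt htreeM

end AltMatchAux

open AltMatch AltMatchAux SimpleGraph

set_option maxHeartbeats 1000000 in
/-- For a `γ̄(t)`-extendable pair `(s,t)` with `out(t) = {y_t, z_t}`, `z_t ∈ T_t`,
the tree path `R` from `t` to `z_t` satisfies `|R| ≤ |Z|` for every
`ρ(t)`-extendable path `Z` from `t` to `z_t`, and `|R| ≤ |Y|` for every
`ρ(t)`-extendable path `Y` from `s` to `y_t`. -/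
theorem tree_path_length_bound
    {V : Type*} [Fintype V] [DecidableEq V] (G : SimpleGraph V) (M : Set (Sym2 V))
    (f : V) (hM : IsMatching G M) (hf : Unmatched M f)
    (hreach : ∀ v : V, altDist G M true f v ≠ ⊤ ∨ altDist G M false f v ≠ ⊤)
    (T : AltBaseTree G M f) (out : V → Sym2 V)
    (hmoe : IsMOE T out) (htie : CanonicalTie T out)
    (s t yt zt : V) (hanc : T.InSubtree s t)
    (hext : ∃ P : G.Walk f t, IsExtension T out (!gam G M f t) s P)
    (hout : out t = s(yt, zt)) (hzt : T.InSubtree t zt) (hyt : ¬ T.InSubtree t yt) :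
    (∀ Z : G.Walk t zt, IsExtendablePath T out (rho M (out t)) Z →
      sInf {n : ℕ | T.parent^[n] zt = t} ≤ Z.length) ∧
    (∀ Y : G.Walk s yt, IsExtendablePath T out (rho M (out t)) Y →
      sInf {n : ℕ | T.parent^[n] zt = t} ≤ Y.length) := by
  classical
  have htf : t ≠ f := by
    intro h
    subst h
    exact hyt (T.parent_reaches yt)
  constructor
  · -- Goal 1 : the Z bound
    rintro Z ⟨P, hs, ⟨hshort, hmem, hlev⟩, hdrop⟩
    by_cases hztt : zt = t
    · have h0 : sInf {n : ℕ | T.parent^[n] zt = t} = 0 :=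
        Nat.le_zero.mp (Nat.sInf_le (show T.parent^[0] zt = t by simpa using hztt))
      rw [h0]
      exact Nat.zero_le _
    · have hban : ∀ e ∈ P.edges, ¬ T.IsOutgoing t e := ban_of_level hmoe hlev
      obtain ⟨hplen, _⟩ := prefix_eq_dm hM hf hreach hshort hs htf hztt hban
      have hPZ : P.length = (P.takeUntil t hs).length + Z.length := by
        rw [← hdrop]
        exact take_drop_length P hs
      have h2 : dm G M f zt ≤ dm G M f t + (Z.length : ℕ∞) := by
        calc dm G M f zt ≤ altDist G M (rho M (out t)) f zt := dm_le _ _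
          _ = (P.length : ℕ∞) := hshort.2.2.symm
          _ = ((P.takeUntil t hs).length : ℕ∞) + (Z.length : ℕ∞) := by
              rw [hPZ]; push_cast; ring
          _ = dm G M f t + (Z.length : ℕ∞) := by rw [hplen]
      have h1 : ((tdepth T t zt : ℕ) : ℕ∞) + dm G M f t ≤ dm G M f zt :=
        insub_depth_le_dm hzt
      obtain ⟨dt, hdt⟩ := exists_nat_eq (dm_ne_top (hreach t))
      rw [← hdt] at h1 h2
      have hfin : dm G M f zt ≠ ⊤ := by
        intro h
        rw [h] at h2
        have h3 : ((dt + Z.length : ℕ) : ℕ∞) = ⊤ := top_le_iff.mp (by push_cast; exact h2)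
        exact coe_ne_top' h3
      obtain ⟨dz, hdz⟩ := exists_nat_eq hfin
      rw [← hdz] at h1 h2
      have h1' : tdepth T t zt + dt ≤ dz := by exact_mod_cast h1
      have h2' : dz ≤ dt + Z.length := by exact_mod_cast h2
      show tdepth T t zt ≤ Z.length
      omega
  · -- Goal 2 : the Y bound
    rintro Y ⟨P', hs', ⟨hshort', hmem', hlev'⟩, hdrop'⟩
    by_cases hztt : zt = t
    · have h0 : sInf {n : ℕ | T.parent^[n] zt = t} = 0 :=
        Nat.le_zero.mp (Nat.sInf_le (show T.parent^[0] zt = t by simpa using hztt))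
      rw [h0]
      exact Nat.zero_le _
    have hban_s : ∀ e ∈ P'.edges, ¬ T.IsOutgoing s e := ban_of_level hmoe hlev'
    by_cases hytTs : T.InSubtree s yt
    swap
    · -- yt outside T_s : impossible
      exfalso
      have hsf : s ≠ f := by
        intro h
        subst h
        exact hytTs (T.parent_reaches yt)
      obtain ⟨_, hRsub⟩ := suffix_in_subtree hshort'.1.1 hsf hban_s hs'
      exact hytTs (hRsub yt (P'.dropUntil s hs').end_mem_support)
    · have hst : s ≠ t := by
        intro h
        exact hyt (h ▸ hytTs)
      have hts : t ≠ s := Ne.symm hst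
      have hk1 : dm G M f s + 1 ≤ dm G M f t := subtree_dm_lt hanc hts
      have hout_ex : ∃ e, T.IsOutgoing t e := outgoing_exists hM hf hreach htf hext
      obtain ⟨hedgeE, hnotree, x, y, hxy, hxT, hyT⟩ := (hmoe t hout_ex).1
      have hyz : yt = x ∧ zt = y := by
        rw [hout] at hxy
        rcases Sym2.eq_iff.mp hxy with ⟨h1, h2⟩ | ⟨h1, h2⟩
        · exact ⟨h1, h2⟩
        · exfalso
          apply hxT
          rw [← h2]
          exact hzt
      have hadjyz : G.Adj yt zt := by
        have hE : s(yt, zt) ∈ G.edgeSet := hout ▸ hedgeE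
        exact hE
      have hA : ((P'.length : ℕ) : ℕ∞) = altDist G M (rho M (out t)) f yt := hshort'.2.2
      have hparA : parityOf P'.length = rho M (out t) := hshort'.2.1
      -- the out-edge matched status agrees with the parity of P'.length
      have houtstat : s(yt, zt) ∈ M ↔ P'.length % 2 = 1 := by
        rw [← hout]
        by_cases hMem : out t ∈ M
        · have hρ : rho M (out t) = true := by rw [rho, if_pos hMem]
          rw [hρ] at hparA
          simp only [hMem, true_iff]
          exact parityOf_true_iff.mp hparA
        · have hρ : rho M (out t) = false := by rw [rho, if_neg hMem]
          rw [hρ] at hparA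
          simp only [hMem, false_iff]
          have := parityOf_false_iff.mp hparA
          omega
      -- dichotomy : dm zt ≤ |P'| + 1
      have hdzt : dm G M f zt ≤ ((P'.length : ℕ) : ℕ∞) + 1 := by
        by_cases hztP : zt ∈ P'.support
        · calc dm G M f zt ≤ ((P'.takeUntil zt hztP).length : ℕ∞) :=
                dm_le_position hshort'.1 hztP
            _ ≤ ((P'.length : ℕ) : ℕ∞) := by
                exact_mod_cast Walk.length_takeUntil_le P' hztP
            _ ≤ _ := le_self_add
        · set S : G.Walk yt zt := Walk.cons hadjyz Walk.nil with hS
          have hSpath : S.IsPath := by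
            rw [hS]
            rw [Walk.isPath_def, Walk.support_cons, Walk.support_nil]
            simp [hadjyz.ne]
          have hSfrom : AltFrom M P'.length S := altFrom_single hadjyz houtstat
          have hpath2 : (P'.append S).IsPath := by
            apply isPath_append hshort'.1.1 hSpath
            intro z hzP hzS
            rw [hS] at hzS
            rw [Walk.support_cons, Walk.support_nil] at hzS
            rcases List.mem_cons.mp hzS with h1 | h2
            · exact h1
            · exfalso
              have hz2 := List.mem_singleton.mp h2
              exact hztP (hz2 ▸ hzP)
          have halt2 : Alt M (P'.append S) := alt_append hshort'.1.2 hSfrom rfl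
          have hlen2 : (P'.append S).length = P'.length + 1 := by
            rw [Walk.length_append, hS]
            rfl
          have := altDist_le_of_alt (P'.append S) ⟨hpath2, halt2⟩
          rw [hlen2] at this
          calc dm G M f zt ≤ altDist G M (parityOf (P'.length + 1)) f zt := dm_le _ _
            _ ≤ ((P'.length + 1 : ℕ) : ℕ∞) := this
            _ = ((P'.length : ℕ) : ℕ∞) + 1 := by push_cast; ring
      -- bound on the prefix at s
      have hYsplit : P'.length = (P'.takeUntil s hs').length + Y.length := by
        rw [← hdrop']
        exact take_drop_length P' hs'
      have hp'le : (((P'.takeUntil s hs').length : ℕ) : ℕ∞) ≤ dm G M f s := by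
        by_cases hsf : s = f
        · subst hsf
          have h0 : (P'.takeUntil s hs').length = 0 :=
            loop_path_length (hshort'.1.1.takeUntil hs')
          rw [h0]
          simp
        · by_cases hyts : yt = s
          · -- P' ends at s itself
            subst hyts
            have hAle : ((P'.length : ℕ) : ℕ∞) ≤ dm G M f yt := by
              obtain ⟨hA1, hAstat⟩ :=
                endpoint_structure hshort'.1.1 hshort'.1.2 hsf hban_s
              rcases hgs : gam G M f yt with _ | _
              · -- gam s = false
                rcases hρ : rho M (out t) with _ | _
                · rw [hρ] at hA
                  rw [dm_eq_false hgs, ← hA]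
                · exfalso
                  rw [hρ] at hparA
                  have hAodd : P'.length % 2 = 1 := parityOf_true_iff.mp hparA
                  have houtM : out t ∈ M := by
                    by_contra hnm
                    rw [rho, if_neg hnm] at hρ
                    exact Bool.false_ne_true hρ
                  have houtM' : s(yt, zt) ∈ M := hout ▸ houtM
                  obtain ⟨ds, hds⟩ := exists_nat_eq (dm_ne_top (hreach yt))
                  have hnf : altDist G M false f yt = ((ds : ℕ) : ℕ∞) := by
                    rw [← hgs]; exact hds.symm
                  obtain ⟨c, W, hWs, hWlen, hce, hcemem, hcne⟩ :=
                    matched_last hM hsf hnf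
                  have heq2 : s(c, yt) = s(yt, zt) := by
                    by_contra hne2
                    exact hM.2 _ hce _ houtM' hne2 yt
                      (Sym2.mem_mk_right _ _) (Sym2.mem_mk_left _ _)
                  have hczt : c = zt := by
                    rcases Sym2.eq_iff.mp heq2 with ⟨h1, _⟩ | ⟨h1, _⟩
                    · exact absurd h1 hcne
                    · exact h1
                  have hztW : zt ∈ W.support := by
                    rw [← hczt]
                    exact mem_support_of_mem_edges' hcemem (Sym2.mem_mk_left _ _)
                  have hb1 : dm G M f zt ≤ ((W.takeUntil zt hztW).length : ℕ∞) :=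
                    dm_le_position hWs.1 hztW
                  have hb2 : (W.takeUntil zt hztW).length ≤ W.length :=
                    Walk.length_takeUntil_le W hztW
                  have hb3 : dm G M f zt ≤ ((ds : ℕ) : ℕ∞) := by
                    calc dm G M f zt ≤ ((W.takeUntil zt hztW).length : ℕ∞) := hb1
                      _ ≤ ((W.length : ℕ) : ℕ∞) := by exact_mod_cast hb2
                      _ = ((ds : ℕ) : ℕ∞) := by rw [hWlen]
                  have hb4 : dm G M f t ≤ dm G M f zt := subtree_dm_le hzt
                  have hb5 : ((ds : ℕ) : ℕ∞) + 1 ≤ dm G M f t := by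
                    rw [hds]; exact hk1
                  have : ((ds : ℕ) : ℕ∞) + 1 ≤ ((ds : ℕ) : ℕ∞) :=
                    le_trans hb5 (le_trans hb4 hb3)
                  have : ds + 1 ≤ ds := by exact_mod_cast this
                  omega
              · -- gam s = true
                rcases hρ : rho M (out t) with _ | _
                · exfalso
                  rw [hρ] at hparA
                  have hAev : P'.length % 2 = 0 := parityOf_false_iff.mp hparA
                  have htreeM : s(T.parent yt, yt) ∈ M := hAstat.mpr (by omega)
                  exact K_lemma hM hf hreach hsf hgs htreeM
                · rw [hρ] at hA
                  rw [dm_eq_true hgs, ← hA]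
            calc (((P'.takeUntil yt hs').length : ℕ) : ℕ∞)
                ≤ ((P'.length : ℕ) : ℕ∞) := by
                  exact_mod_cast Walk.length_takeUntil_le P' hs'
              _ ≤ dm G M f yt := hAle
          · obtain ⟨hpl, _⟩ := prefix_eq_dm hM hf hreach hshort' hs' hsf hyts hban_s
            rw [hpl]
      -- final arithmetic
      have h1 : ((tdepth T t zt : ℕ) : ℕ∞) + dm G M f t ≤ dm G M f zt :=
        insub_depth_le_dm hzt
      obtain ⟨ds, hds⟩ := exists_nat_eq (dm_ne_top (hreach s))
      obtain ⟨dt, hdt⟩ := exists_nat_eq (dm_ne_top (hreach t))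
      have hfinz : dm G M f zt ≠ ⊤ := by
        intro h
        rw [h] at hdzt
        have : ((P'.length + 1 : ℕ) : ℕ∞) = ⊤ := by
          apply top_le_iff.mp
          calc (⊤ : ℕ∞) ≤ ((P'.length : ℕ) : ℕ∞) + 1 := hdzt
            _ = ((P'.length + 1 : ℕ) : ℕ∞) := by push_cast; ring
        exact coe_ne_top' this
      obtain ⟨dz, hdz⟩ := exists_nat_eq hfinz
      rw [← hds] at hp'le hk1
      rw [← hdt] at hk1 h1
      rw [← hdz] at h1 hdzt
      have c1 : tdepth T t zt + dt ≤ dz := by exact_mod_cast h1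
      have c2 : dz ≤ P'.length + 1 := by
        have : ((dz : ℕ) : ℕ∞) ≤ ((P'.length + 1 : ℕ) : ℕ∞) := by
          calc ((dz : ℕ) : ℕ∞) ≤ ((P'.length : ℕ) : ℕ∞) + 1 := hdzt
            _ = ((P'.length + 1 : ℕ) : ℕ∞) := by push_cast; ring
        exact_mod_cast this
      have c3 : ds + 1 ≤ dt := by exact_mod_cast hk1
      have c4 : (P'.takeUntil s hs').length ≤ ds := by exact_mod_cast hp'le
      show tdepth T t zt ≤ Y.length
      omega
end
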